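/- arXiv:2604.07704 — 7 statements merged into one kernel-verified Lean document; each statement's English description precedes it below -/
import Mathlib

section
/- Let 𝒜 be a complex Banach algebra and let L₁, L₂ ∈ 𝒜 with L := L₁ + L₂. Then for every t ≥ 0, exp((t/2)L₁)·exp(t L₂)·exp((t/2)L₁) − exp(t L) = (1/2) ∫₀ᵗ ∫₀ˢ exp((s/2)L₁) · exp((s−u)L₂) · [ exp(u L₂)·exp(((s−u)/2)L₁) , [L₂, L₁] ] · exp((u/2)L₁) · exp((t−s)L) du ds (the exact local error representation for the second-order Strang splitting). -/
open MeasureTheory NormedSpace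

section StrangAux

variable {𝒜 : Type*} [NormedRing 𝒜] [NormedAlgebra ℝ 𝒜] [CompleteSpace 𝒜]

private lemma expDeriv (a : 𝒜) {h : ℝ → ℝ} {h' x : ℝ} (hh : HasDerivAt h h' x) :
    HasDerivAt (fun u => exp (h u • a)) (h' • (exp (h x • a) * a)) x :=
  (hasDerivAt_exp_smul_const a (h x)).scomp x hh

private lemma expComm (a : 𝒜) (c : ℝ) : a * exp (c • a) = exp (c • a) * a :=
  (((Commute.refl a).smul_right c).exp_right).eq

private lemma expAdd (x : 𝒜) (a b : ℝ) : exp (a • x) * exp (b • x) = exp ((a+b) • x) := by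
  let +nondep : NormedAlgebra ℚ 𝒜 := .restrictScalars ℚ ℝ 𝒜
  rw [add_smul, exp_add_of_commute (((Commute.refl x).smul_left a).smul_right b)]

private lemma expCont (a : 𝒜) {h : ℝ → ℝ} (hh : Continuous h) :
    Continuous fun u => exp (h u • a) :=
  by let +nondep : NormedAlgebra ℚ 𝒜 := .restrictScalars ℚ ℝ 𝒜; exact exp_continuous.comp (hh.smul continuous_const)

lemma rho (L₁ L₂ : 𝒜) (s : ℝ) :
    L₂ * exp ((s/2) • L₁) - exp ((s/2) • L₁) * L₂
      = (1/2 : ℝ) • ∫ u in (0:ℝ)..s,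
          exp (((s-u)/2) • L₁) * (L₂ * L₁ - L₁ * L₂) * exp ((u/2) • L₁) := by
  have key : ∀ u : ℝ, HasDerivAt
      (fun u => exp (((s-u)/2) • L₁) * L₂ * exp ((u/2) • L₁))
      ((1/2 : ℝ) • (exp (((s-u)/2) • L₁) * (L₂ * L₁ - L₁ * L₂) * exp ((u/2) • L₁))) u := by
    intro u
    have d1 : HasDerivAt (fun u : ℝ => exp (((s-u)/2) • L₁))
        (((0-1)/2 : ℝ) • (exp (((s-u)/2) • L₁) * L₁)) u :=
      expDeriv L₁ (((hasDerivAt_const u s).sub (hasDerivAt_id u)).div_const 2)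
    have d2 : HasDerivAt (fun u : ℝ => exp ((u/2) • L₁))
        ((1/2 : ℝ) • (exp ((u/2) • L₁) * L₁)) u := by
      have := expDeriv L₁ ((hasDerivAt_id u).div_const 2)
      simpa using this
    have := (d1.fun_mul (hasDerivAt_const u L₂)).fun_mul d2
    convert this using 1
    rw [← expComm L₁ (u/2)]
    simp only [mul_zero, add_zero, smul_mul_assoc, mul_smul_comm]
    norm_num
    rw [← sub_eq_neg_add, ← smul_sub]
    congr 1
    noncomm_ring
  have hint : IntervalIntegrable
      (fun u => (1/2 : ℝ) • (exp (((s-u)/2) • L₁) * (L₂ * L₁ - L₁ * L₂) * exp ((u/2) • L₁)))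
      volume 0 s := by
    apply Continuous.intervalIntegrable
    exact (((expCont L₁ (by fun_prop)).mul continuous_const).mul (expCont L₁ (by fun_prop))).const_smul _
  have h := intervalIntegral.integral_eq_sub_of_hasDerivAt (fun u _ => key u) hint
  rw [intervalIntegral.integral_smul] at h
  rw [h]
  simp [exp_zero]

private lemma commShift (L₂ E X m d : 𝒜) (hw : m * L₂ - L₂ * m = d) :
    (-1 : ℝ) • (E * L₂) * (m * X - X * m) + E * (m * (L₂ * X) - L₂ * X * m) = E * d * X := by
  rw [← hw]
  simp only [neg_smul, one_smul]
  noncomm_ring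

lemma psi (L₁ L₂ : 𝒜) (s : ℝ) :
    ((1/2:ℝ) • L₁ + L₂) * (exp (s • L₂) * exp ((s/2) • L₁))
      - (exp (s • L₂) * exp ((s/2) • L₁)) * ((1/2:ℝ) • L₁ + L₂)
    = exp (s • L₂) * (L₂ * exp ((s/2) • L₁) - exp ((s/2) • L₁) * L₂)
      - (1/2:ℝ) • ∫ u in (0:ℝ)..s,
          exp ((s-u) • L₂) * (L₂ * L₁ - L₁ * L₂) * (exp (u • L₂) * exp ((s/2) • L₁)) := by
  set M : 𝒜 := (1/2:ℝ) • L₁ + L₂ with hMdef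
  set A : 𝒜 := exp ((s/2) • L₁) with hA
  have hM : M * L₂ - L₂ * M = (1/2:ℝ) • (L₁ * L₂ - L₂ * L₁) := by
    rw [hMdef]
    simp only [add_mul, mul_add, smul_mul_assoc, mul_smul_comm, smul_sub]
    abel
  have key : ∀ u : ℝ, HasDerivAt
      (fun u => exp ((s-u) • L₂) * (M * (exp (u • L₂) * A) - (exp (u • L₂) * A) * M))
      ((-(1/2) : ℝ) • (exp ((s-u) • L₂) * (L₂ * L₁ - L₁ * L₂) * (exp (u • L₂) * A))) u := by
    intro u
    have d1 : HasDerivAt (fun u : ℝ => exp ((s-u) • L₂))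
        ((-1 : ℝ) • (exp ((s-u) • L₂) * L₂)) u := by
      have := expDeriv L₂ ((hasDerivAt_const u s).sub (hasDerivAt_id u))
      simpa using this
    have dX : HasDerivAt (fun u : ℝ => exp (u • L₂) * A)
        (L₂ * (exp (u • L₂) * A)) u := by
      have := (hasDerivAt_exp_smul_const L₂ u).mul_const A
      rw [← expComm L₂ u, mul_assoc] at this
      exact this
    have dcomm : HasDerivAt
        (fun u : ℝ => M * (exp (u • L₂) * A) - (exp (u • L₂) * A) * M)
        (M * (L₂ * (exp (u • L₂) * A)) - L₂ * (exp (u • L₂) * A) * M) u :=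
      (dX.const_mul M).sub (dX.mul_const M)
    have := (d1.fun_mul dcomm)
    convert this using 1
    rw [commShift L₂ (exp ((s-u) • L₂)) (exp (u • L₂) * A) M _ hM]
    rw [show L₁ * L₂ - L₂ * L₁ = -(L₂ * L₁ - L₁ * L₂) from (neg_sub _ _).symm]
    simp only [smul_neg, mul_neg, neg_mul, neg_smul, mul_smul_comm, smul_mul_assoc]
  have hint : IntervalIntegrable
      (fun u => (-(1/2) : ℝ) • (exp ((s-u) • L₂) * (L₂ * L₁ - L₁ * L₂) * (exp (u • L₂) * A)))
      volume 0 s := by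
    apply Continuous.intervalIntegrable
    exact (((expCont L₂ (by fun_prop)).mul continuous_const).mul
      ((expCont L₂ (by fun_prop)).mul continuous_const)).const_smul _
  have h := intervalIntegral.integral_eq_sub_of_hasDerivAt (fun u _ => key u) hint
  rw [intervalIntegral.integral_smul, neg_smul] at h
  have hMA : M * A - A * M = L₂ * A - A * L₂ := by
    rw [hMdef, hA]
    simp only [add_mul, mul_add, smul_mul_assoc, mul_smul_comm, ← expComm L₁ (s/2)]
    abel
  simp only [sub_self, sub_zero, zero_smul, exp_zero, one_mul, hMA] at h
  have h2 := sub_eq_iff_eq_add.mp h.symm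
  rw [h2]
  abel

lemma Hrep (L₁ L₂ : 𝒜) (s : ℝ) :
    ((1/2:ℝ) • L₁ + L₂) * (exp (s • L₂) * exp ((s/2) • L₁))
      - (exp (s • L₂) * exp ((s/2) • L₁)) * ((1/2:ℝ) • L₁ + L₂)
    = (1/2:ℝ) • ∫ u in (0:ℝ)..s,
        exp ((s-u) • L₂) *
          (exp (u • L₂) * exp (((s-u)/2) • L₁) * (L₂ * L₁ - L₁ * L₂)
            - (L₂ * L₁ - L₁ * L₂) * (exp (u • L₂) * exp (((s-u)/2) • L₁))) *
          exp ((u/2) • L₁) := by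
  have hpt : ∀ u : ℝ,
      exp ((s-u) • L₂) *
        (exp (u • L₂) * exp (((s-u)/2) • L₁) * (L₂ * L₁ - L₁ * L₂)
          - (L₂ * L₁ - L₁ * L₂) * (exp (u • L₂) * exp (((s-u)/2) • L₁))) *
        exp ((u/2) • L₁)
      = exp (s • L₂) * (exp (((s-u)/2) • L₁) * (L₂ * L₁ - L₁ * L₂) * exp ((u/2) • L₁))
        - (exp ((s-u) • L₂) * (L₂ * L₁ - L₁ * L₂) * exp (u • L₂)) * exp ((s/2) • L₁) := by
    intro u
    have h1 : exp ((s-u) • L₂) * exp (u • L₂) = exp (s • L₂) := by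
      rw [expAdd, sub_add_cancel]
    have h2 : exp (((s-u)/2) • L₁) * exp ((u/2) • L₁) = exp ((s/2) • L₁) := by
      rw [expAdd]
      congr 2
      ring
    rw [mul_sub, sub_mul, ← h1, ← h2]
    noncomm_ring
  rw [intervalIntegral.integral_congr (fun u _ => hpt u)]
  have c1 : Continuous fun u : ℝ => exp (((s-u)/2) • L₁) * (L₂ * L₁ - L₁ * L₂) * exp ((u/2) • L₁) :=
    ((expCont L₁ (by fun_prop)).mul continuous_const).mul (expCont L₁ (by fun_prop))
  have c2 : Continuous fun u : ℝ => exp ((s-u) • L₂) * (L₂ * L₁ - L₁ * L₂) * exp (u • L₂) :=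
    ((expCont L₂ (by fun_prop)).mul continuous_const).mul (expCont L₂ (by fun_prop))
  rw [intervalIntegral.integral_sub
      ((continuous_const.fun_mul c1).intervalIntegrable 0 s)
      ((c2.fun_mul continuous_const).intervalIntegrable 0 s)]
  have p1 : (∫ u in (0:ℝ)..s, exp (s • L₂) * (exp (((s-u)/2) • L₁) * (L₂ * L₁ - L₁ * L₂) * exp ((u/2) • L₁)))
      = exp (s • L₂) * ∫ u in (0:ℝ)..s, exp (((s-u)/2) • L₁) * (L₂ * L₁ - L₁ * L₂) * exp ((u/2) • L₁) := by
    have h := ContinuousLinearMap.intervalIntegral_comp_comm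
      (ContinuousLinearMap.mul ℝ 𝒜 (exp (s • L₂))) (c1.intervalIntegrable (μ := volume) 0 s)
    simpa [ContinuousLinearMap.mul_apply', ContinuousLinearMap.flip_apply] using h
  have p2 : (∫ u in (0:ℝ)..s, (exp ((s-u) • L₂) * (L₂ * L₁ - L₁ * L₂) * exp (u • L₂)) * exp ((s/2) • L₁))
      = (∫ u in (0:ℝ)..s, exp ((s-u) • L₂) * (L₂ * L₁ - L₁ * L₂) * exp (u • L₂)) * exp ((s/2) • L₁) := by
    have h := ContinuousLinearMap.intervalIntegral_comp_comm
      ((ContinuousLinearMap.mul ℝ 𝒜).flip (exp ((s/2) • L₁))) (c2.intervalIntegrable (μ := volume) 0 s)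
    simpa [ContinuousLinearMap.mul_apply', ContinuousLinearMap.flip_apply] using h
  rw [p1, p2, smul_sub, ← mul_smul_comm, ← rho L₁ L₂ s]
  have hpsi := psi L₁ L₂ s
  rw [intervalIntegral.integral_congr (g := fun u =>
      (exp ((s-u) • L₂) * (L₂ * L₁ - L₁ * L₂) * exp (u • L₂)) * exp ((s/2) • L₁))
      (fun u _ => (mul_assoc _ _ _).symm), p2, ← smul_mul_assoc] at hpsi
  rw [hpsi, smul_mul_assoc]

private lemma outerAlg (P Q A B E : 𝒜) :
    A * ((P + Q) * (B * A) - B * A * (P + Q)) * E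
      = ((A * P * B + A * (Q * B)) * A + A * B * (A * P)) * E
        + A * B * A * -((P + (P + Q)) * E) := by
  noncomm_ring

lemma outer (L₁ L₂ : 𝒜) (t : ℝ) :
    exp ((t/2) • L₁) * exp (t • L₂) * exp ((t/2) • L₁) - exp (t • (L₁ + L₂))
    = ∫ s in (0:ℝ)..t, exp ((s/2) • L₁) *
        (((1/2:ℝ) • L₁ + L₂) * (exp (s • L₂) * exp ((s/2) • L₁))
          - (exp (s • L₂) * exp ((s/2) • L₁)) * ((1/2:ℝ) • L₁ + L₂)) *
        exp ((t-s) • (L₁ + L₂)) := by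
  have key : ∀ s : ℝ, HasDerivAt
      (fun s => exp ((s/2) • L₁) * exp (s • L₂) * exp ((s/2) • L₁) * exp ((t-s) • (L₁ + L₂)))
      (exp ((s/2) • L₁) *
        (((1/2:ℝ) • L₁ + L₂) * (exp (s • L₂) * exp ((s/2) • L₁))
          - (exp (s • L₂) * exp ((s/2) • L₁)) * ((1/2:ℝ) • L₁ + L₂)) *
        exp ((t-s) • (L₁ + L₂))) s := by
    intro s
    have h1 : HasDerivAt (fun s : ℝ => exp ((s/2) • L₁))
        ((1/2 : ℝ) • (exp ((s/2) • L₁) * L₁)) s := by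
      simpa using expDeriv L₁ ((hasDerivAt_id s).div_const 2)
    have h2 : HasDerivAt (fun s : ℝ => exp (s • L₂)) (exp (s • L₂) * L₂) s := by
      simpa using expDeriv L₂ (hasDerivAt_id s)
    have h4 : HasDerivAt (fun s : ℝ => exp ((t-s) • (L₁ + L₂)))
        ((-1 : ℝ) • (exp ((t-s) • (L₁ + L₂)) * (L₁ + L₂))) s := by
      simpa using expDeriv (L₁ + L₂) ((hasDerivAt_const s t).sub (hasDerivAt_id s))
    have hf := ((h1.fun_mul h2).fun_mul h1).fun_mul h4
    convert hf using 1
    simp only [neg_smul, one_smul]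
    rw [← expComm L₂ s, ← expComm (L₁ + L₂) (t-s), ← mul_smul_comm,
      show L₁ + L₂ = (1/2:ℝ) • L₁ + ((1/2:ℝ) • L₁ + L₂) by
        rw [← add_assoc, ← add_smul]; norm_num]
    exact outerAlg _ _ _ _ _
  have cBA : Continuous fun s : ℝ => exp (s • L₂) * exp ((s/2) • L₁) :=
    (expCont L₂ (by fun_prop)).mul (expCont L₁ (by fun_prop))
  have cint : Continuous (fun s : ℝ => exp ((s/2) • L₁) *
      (((1/2:ℝ) • L₁ + L₂) * (exp (s • L₂) * exp ((s/2) • L₁))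
        - (exp (s • L₂) * exp ((s/2) • L₁)) * ((1/2:ℝ) • L₁ + L₂)) *
      exp ((t-s) • (L₁ + L₂))) :=
    ((expCont L₁ (by fun_prop)).mul
      ((continuous_const.mul cBA).sub (cBA.mul continuous_const))).mul
      (expCont (L₁ + L₂) (by fun_prop))
  have h := intervalIntegral.integral_eq_sub_of_hasDerivAt (fun s _ => key s)
    (cint.intervalIntegrable 0 t)
  rw [h]
  simp [exp_zero]

end StrangAux

/-- Exact local error representation for the second-order Strang splitting:
`exp((t/2)L₁) exp(tL₂) exp((t/2)L₁) − exp(tL)` equals a double integral of a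
double-commutator expression, where `L = L₁ + L₂`. -/
theorem strang_exact_local_error_representation
    {𝒜 : Type*} [NormedRing 𝒜] [NormedAlgebra ℂ 𝒜] [CompleteSpace 𝒜]
    (L₁ L₂ : 𝒜) (t : ℝ) (ht : 0 ≤ t) :
    exp ((t / 2) • L₁) * exp (t • L₂) * exp ((t / 2) • L₁)
        - exp (t • (L₁ + L₂)) =
      (1 / 2 : ℝ) • ∫ s in (0:ℝ)..t, ∫ u in (0:ℝ)..s,
        exp ((s / 2) • L₁) * exp ((s - u) • L₂) *
          (exp (u • L₂) * exp (((s - u) / 2) • L₁) * (L₂ * L₁ - L₁ * L₂)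
            - (L₂ * L₁ - L₁ * L₂) *
              (exp (u • L₂) * exp (((s - u) / 2) • L₁))) *
          exp ((u / 2) • L₁) * exp ((t - s) • (L₁ + L₂)) := by

  rw [outer L₁ L₂ t, ← intervalIntegral.integral_smul]
  apply intervalIntegral.integral_congr
  intro s _
  simp only
  rw [Hrep L₁ L₂ s, mul_smul_comm, smul_mul_assoc]
  congr 1
  have cmid : Continuous fun u : ℝ =>
      exp ((s-u) • L₂) *
        (exp (u • L₂) * exp (((s-u)/2) • L₁) * (L₂ * L₁ - L₁ * L₂)
          - (L₂ * L₁ - L₁ * L₂) * (exp (u • L₂) * exp (((s-u)/2) • L₁))) *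
        exp ((u/2) • L₁) := by
    have cX : Continuous fun u : ℝ => exp (u • L₂) * exp (((s-u)/2) • L₁) :=
      (expCont L₂ (by fun_prop)).mul (expCont L₁ (by fun_prop))
    exact ((expCont L₂ (by fun_prop)).mul
      ((cX.mul continuous_const).sub (continuous_const.mul cX))).mul (expCont L₁ (by fun_prop))
  have q1 : exp ((s/2) • L₁) * (∫ u in (0:ℝ)..s,
      exp ((s-u) • L₂) *
        (exp (u • L₂) * exp (((s-u)/2) • L₁) * (L₂ * L₁ - L₁ * L₂)
          - (L₂ * L₁ - L₁ * L₂) * (exp (u • L₂) * exp (((s-u)/2) • L₁))) *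
        exp ((u/2) • L₁))
      = ∫ u in (0:ℝ)..s, exp ((s/2) • L₁) *
          (exp ((s-u) • L₂) *
            (exp (u • L₂) * exp (((s-u)/2) • L₁) * (L₂ * L₁ - L₁ * L₂)
              - (L₂ * L₁ - L₁ * L₂) * (exp (u • L₂) * exp (((s-u)/2) • L₁))) *
            exp ((u/2) • L₁)) := by
    have h := ContinuousLinearMap.intervalIntegral_comp_comm
      (ContinuousLinearMap.mul ℝ 𝒜 (exp ((s/2) • L₁)))
      (cmid.intervalIntegrable (μ := MeasureTheory.volume) 0 s)
    simpa [ContinuousLinearMap.mul_apply'] using h.symm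
  rw [q1]
  have q2 : (∫ u in (0:ℝ)..s, exp ((s/2) • L₁) *
        (exp ((s-u) • L₂) *
          (exp (u • L₂) * exp (((s-u)/2) • L₁) * (L₂ * L₁ - L₁ * L₂)
            - (L₂ * L₁ - L₁ * L₂) * (exp (u • L₂) * exp (((s-u)/2) • L₁))) *
          exp ((u/2) • L₁))) * exp ((t-s) • (L₁ + L₂))
      = ∫ u in (0:ℝ)..s, (exp ((s/2) • L₁) *
          (exp ((s-u) • L₂) *
            (exp (u • L₂) * exp (((s-u)/2) • L₁) * (L₂ * L₁ - L₁ * L₂)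
              - (L₂ * L₁ - L₁ * L₂) * (exp (u • L₂) * exp (((s-u)/2) • L₁))) *
            exp ((u/2) • L₁))) * exp ((t-s) • (L₁ + L₂)) := by
    have cmid2 : Continuous fun u : ℝ => exp ((s/2) • L₁) *
        (exp ((s-u) • L₂) *
          (exp (u • L₂) * exp (((s-u)/2) • L₁) * (L₂ * L₁ - L₁ * L₂)
            - (L₂ * L₁ - L₁ * L₂) * (exp (u • L₂) * exp (((s-u)/2) • L₁))) *
          exp ((u/2) • L₁)) := continuous_const.mul cmid
    have h := ContinuousLinearMap.intervalIntegral_comp_comm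
      ((ContinuousLinearMap.mul ℝ 𝒜).flip (exp ((t-s) • (L₁ + L₂))))
      (cmid2.intervalIntegrable (μ := MeasureTheory.volume) 0 s)
    simpa [ContinuousLinearMap.flip_apply, ContinuousLinearMap.mul_apply'] using h.symm
  rw [q2]
  apply intervalIntegral.integral_congr
  intro u _
  simp only [mul_assoc]
end

section
/- Let 𝒜 be a complex Banach algebra and let L₁, L₂ ∈ 𝒜 with L := L₁ + L₂. Then for every t ≥ 0, exp((t/2)L₁)·exp(t L₂)·exp((t/2)L₁) − exp(t L) = ∫₀ᵗ exp((s/2)L₁) · [ (1/2)L₁ + L₂ , exp(s L₂)·exp((s/2)L₁) ] · exp((t−s)L) ds. -/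
open MeasureTheory NormedSpace

/-- First step of the Strang-splitting error representation:
`exp((t/2)L₁) exp(tL₂) exp((t/2)L₁) − exp(tL)
  = ∫₀ᵗ exp((s/2)L₁) [ (1/2)L₁ + L₂ , exp(sL₂) exp((s/2)L₁) ] exp((t−s)L) ds`,
where `L = L₁ + L₂` and `[a,b] = a*b − b*a`. -/
theorem strang_error_first_representation
    {𝒜 : Type*} [NormedRing 𝒜] [NormedAlgebra ℂ 𝒜] [CompleteSpace 𝒜]
    (L₁ L₂ : 𝒜) (t : ℝ) (ht : 0 ≤ t) :
    exp ((t / 2) • L₁) * exp (t • L₂) * exp ((t / 2) • L₁)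
        - exp (t • (L₁ + L₂)) =
      ∫ s in (0:ℝ)..t,
        exp ((s / 2) • L₁) *
          (((1 / 2 : ℝ) • L₁ + L₂) * (exp (s • L₂) * exp ((s / 2) • L₁))
            - (exp (s • L₂) * exp ((s / 2) • L₁)) * ((1 / 2 : ℝ) • L₁ + L₂)) *
          exp ((t - s) • (L₁ + L₂)) := by
  set L : 𝒜 := L₁ + L₂ with hLdef
  set a : 𝒜 := (1 / 2 : ℝ) • L₁ with hadef
  have hrw : ∀ s : ℝ, (s / 2) • L₁ = s • a := by
    intro s
    rw [hadef, smul_smul, mul_one_div]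
  simp only [hrw]
  -- the path function
  set f : ℝ → 𝒜 := fun s =>
    exp (s • a) * exp (s • L₂) * exp (s • a) * exp ((t - s) • L) with hfdef
  set F : ℝ → 𝒜 := fun s =>
    exp (s • a) *
      ((a + L₂) * (exp (s • L₂) * exp (s • a))
        - (exp (s • L₂) * exp (s • a)) * (a + L₂)) *
      exp ((t - s) • L) with hFdef
  have hL1 : L₁ = a + a := by
    rw [hadef, ← add_smul]; norm_num
  have key : ∀ s : ℝ, HasDerivAt f (F s) s := by
    intro s
    have hA : HasDerivAt (fun u : ℝ => exp (u • a)) (a * exp (s • a)) s :=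
      hasDerivAt_exp_smul_const' a s
    have hB : HasDerivAt (fun u : ℝ => exp (u • L₂)) (L₂ * exp (s • L₂)) s :=
      hasDerivAt_exp_smul_const' L₂ s
    have hDin : HasDerivAt (fun u : ℝ => exp (u • L)) (L * exp ((t - s) • L)) (t - s) :=
      hasDerivAt_exp_smul_const' L (t - s)
    have hg : HasDerivAt (fun u : ℝ => t - u) (-1 : ℝ) s := by
      simpa using (hasDerivAt_id s).const_sub t
    have hD : HasDerivAt (fun u : ℝ => exp ((t - u) • L))
        ((-1 : ℝ) • (L * exp ((t - s) • L))) s := HasDerivAt.scomp s hDin hg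
    have hf' := ((hA.mul hB).mul hA).mul hD
    have hc : a * exp (s • a) = exp (s • a) * a :=
      (((Commute.refl a).smul_right s).exp_right).eq
    convert hf' using 1
    · rfl
    rw [hFdef]
    simp only [neg_one_smul, Pi.mul_apply]
    rw [hLdef, hL1, hc]
    noncomm_ring
  have hcontF : Continuous F := by
    have hce : Continuous (exp : 𝒜 → 𝒜) :=
      continuous_iff_continuousAt.2 fun x => (exp_analytic (𝕂 := ℂ) x).continuousAt
    have h1 : Continuous fun s : ℝ => exp (s • a) :=
      hce.comp (continuous_id.smul continuous_const)
    have h2 : Continuous fun s : ℝ => exp (s • L₂) :=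
      hce.comp (continuous_id.smul continuous_const)
    have h3 : Continuous fun s : ℝ => exp ((t - s) • L) :=
      hce.comp ((continuous_const.sub continuous_id).smul continuous_const)
    rw [hFdef]
    exact (h1.mul (((continuous_const.mul (h2.mul h1)).sub
      ((h2.mul h1).mul continuous_const)))).mul h3
  have hint : IntervalIntegrable F volume 0 t := hcontF.intervalIntegrable 0 t
  have hFTC := intervalIntegral.integral_eq_sub_of_hasDerivAt
    (f := f) (f' := F) (fun s _ => key s) hint
  rw [hFTC, hfdef]
  simp [sub_self, zero_smul, exp_zero]
end

section
/- Let 𝒜 be a complex Banach algebra and let L₁, L₂ ∈ 𝒜. Then for every s ≥ 0, [ (1/2)L₁ + L₂ , exp(s L₂)·exp((s/2)L₁) ] = (1/2) ∫₀ˢ exp((s−u)L₂) · [ exp(u L₂)·exp(((s−u)/2)L₁) , [L₂, L₁] ] · exp((u/2)L₁) du. -/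
open MeasureTheory NormedSpace

section Aux

set_option linter.unusedSectionVars false

variable {𝒜 : Type*} [NormedRing 𝒜] [NormedAlgebra ℂ 𝒜] [CompleteSpace 𝒜]

private lemma hasDerivAt_expC (x : 𝒜) (t : ℝ) :
    HasDerivAt (fun u : ℝ => exp (u • x)) (exp (t • x) * x) t := by
  have := hasDerivAt_exp_smul_const (𝕂 := ℝ) x t
  simpa using this

private lemma expC_comm (x : 𝒜) (t : ℝ) :
    exp (t • x) * x = x * exp (t • x) :=
  (((Commute.refl x).smul_left t).exp_left).eq

private lemma expC_add (x : 𝒜) (a b : ℝ) :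
    exp ((a + b) • x) = exp (a • x) * exp (b • x) := by
  let +nondep : NormedAlgebra ℚ 𝒜 := .restrictScalars ℚ ℂ 𝒜
  rw [add_smul, exp_add_of_commute (((Commute.refl x).smul_left a).smul_right b)]

end Aux

/-- Commutator identity for the Strang splitting:
`[ (1/2)L₁ + L₂ , exp(sL₂) exp((s/2)L₁) ]
  = (1/2) ∫₀ˢ exp((s−u)L₂) [ exp(uL₂) exp(((s−u)/2)L₁), [L₂,L₁] ] exp((u/2)L₁) du`. -/
theorem strang_commutator_representation
    {𝒜 : Type*} [NormedRing 𝒜] [NormedAlgebra ℂ 𝒜] [CompleteSpace 𝒜]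
    (L₁ L₂ : 𝒜) (s : ℝ) (hs : 0 ≤ s) :
    ((1 / 2 : ℝ) • L₁ + L₂) * (exp (s • L₂) * exp ((s / 2) • L₁))
        - (exp (s • L₂) * exp ((s / 2) • L₁)) * ((1 / 2 : ℝ) • L₁ + L₂) =
      (1 / 2 : ℝ) • ∫ u in (0:ℝ)..s,
        exp ((s - u) • L₂) *
          (exp (u • L₂) * exp (((s - u) / 2) • L₁) * (L₂ * L₁ - L₁ * L₂)
            - (L₂ * L₁ - L₁ * L₂) *
              (exp (u • L₂) * exp (((s - u) / 2) • L₁))) *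
          exp ((u / 2) • L₁) := by
  set A : 𝒜 := (1 / 2 : ℝ) • L₁ + L₂ with hA
  have hE2 : ∀ u : ℝ, HasDerivAt (fun u : ℝ => exp ((s - u) • L₂))
      ((-1 : ℝ) • (exp ((s - u) • L₂) * L₂)) u := by
    intro u
    have h1 : HasDerivAt (fun v : ℝ => s - v) (-1 : ℝ) u := by
      simpa using (hasDerivAt_id u).const_sub s
    exact (hasDerivAt_expC L₂ (s - u)).scomp_of_eq u h1 rfl
  have hF : ∀ u : ℝ, HasDerivAt (fun u : ℝ => exp (((s - u) / 2) • L₁))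
      (((-1 : ℝ) / 2) • (exp (((s - u) / 2) • L₁) * L₁)) u := by
    intro u
    have h1 : HasDerivAt (fun v : ℝ => (s - v) / 2) ((-1 : ℝ) / 2) u := by
      simpa using ((hasDerivAt_id u).const_sub s).div_const 2
    exact (hasDerivAt_expC L₁ ((s - u) / 2)).scomp_of_eq u h1 rfl
  have hG : ∀ u : ℝ, HasDerivAt (fun u : ℝ => exp ((u / 2) • L₁))
      (((1 : ℝ) / 2) • (exp ((u / 2) • L₁) * L₁)) u := by
    intro u
    have h1 : HasDerivAt (fun v : ℝ => v / 2) ((1 : ℝ) / 2) u := by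
      simpa using (hasDerivAt_id u).div_const 2
    exact (hasDerivAt_expC L₁ (u / 2)).scomp_of_eq u h1 rfl
  have hD1 : ∀ u : ℝ, HasDerivAt (fun u : ℝ => exp ((s - u) • L₂) * A * exp (u • L₂))
      (exp ((s - u) • L₂) * (A * L₂ - L₂ * A) * exp (u • L₂)) u := by
    intro u
    have h := ((hE2 u).mul_const A).mul (hasDerivAt_expC L₂ u)
    refine h.congr_deriv (Eq.symm ?_)
    rw [expC_comm L₂ u]
    simp only [neg_smul, one_smul, smul_mul_assoc, neg_mul]
    simp only [mul_sub, sub_mul, mul_assoc]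
    abel
  have hD2 : ∀ u : ℝ, HasDerivAt
      (fun u : ℝ => exp (((s - u) / 2) • L₁) * A * exp ((u / 2) • L₁))
      ((1 / 2 : ℝ) • (exp (((s - u) / 2) • L₁) * (A * L₁ - L₁ * A) * exp ((u / 2) • L₁)))
      u := by
    intro u
    have h := ((hF u).mul_const A).mul (hG u)
    refine h.congr_deriv (Eq.symm ?_)
    rw [expC_comm L₁ (u / 2)]
    simp only [neg_div, neg_smul, smul_mul_assoc, mul_smul_comm, neg_mul]
    rw [← smul_neg, ← smul_add]
    congr 1
    simp only [mul_sub, sub_mul, mul_assoc]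
    abel
  have hderiv : ∀ u : ℝ, HasDerivAt (fun u : ℝ =>
      exp ((s - u) • L₂) * A * exp (u • L₂) * exp ((s / 2) • L₁)
        + exp (s • L₂) * (exp (((s - u) / 2) • L₁) * A * exp ((u / 2) • L₁)))
      ((1 / 2 : ℝ) • (exp ((s - u) • L₂) *
          (exp (u • L₂) * exp (((s - u) / 2) • L₁) * (L₂ * L₁ - L₁ * L₂)
            - (L₂ * L₁ - L₁ * L₂) *
              (exp (u • L₂) * exp (((s - u) / 2) • L₁))) *
          exp ((u / 2) • L₁))) u := by
    intro u
    have h := ((hD1 u).mul_const (exp ((s / 2) • L₁))).add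
      ((hD2 u).const_mul (exp (s • L₂)))
    refine h.congr_deriv (Eq.symm ?_)
    have h1 : A * L₂ - L₂ * A = (1 / 2 : ℝ) • (L₁ * L₂ - L₂ * L₁) := by
      rw [hA]
      simp only [add_mul, mul_add, smul_mul_assoc, mul_smul_comm, smul_sub]
      abel
    have h2 : A * L₁ - L₁ * A = L₂ * L₁ - L₁ * L₂ := by
      rw [hA]
      simp only [add_mul, mul_add, smul_mul_assoc, mul_smul_comm]
      abel
    have hEs : exp (s • L₂) = exp ((s - u) • L₂) * exp (u • L₂) := by
      rw [← expC_add, sub_add_cancel]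
    have hE1 : exp ((s / 2) • L₁)
        = exp (((s - u) / 2) • L₁) * exp ((u / 2) • L₁) := by
      rw [← expC_add, ← add_div, sub_add_cancel]
    rw [h1, h2, hEs, hE1]
    simp only [smul_mul_assoc, mul_smul_comm]
    rw [← smul_add]
    congr 1
    simp only [mul_sub, sub_mul, mul_assoc]
    abel
  have hcont : Continuous fun u : ℝ => ((1 / 2 : ℝ) • (exp ((s - u) • L₂) *
          (exp (u • L₂) * exp (((s - u) / 2) • L₁) * (L₂ * L₁ - L₁ * L₂)
            - (L₂ * L₁ - L₁ * L₂) *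
              (exp (u • L₂) * exp (((s - u) / 2) • L₁))) *
          exp ((u / 2) • L₁))) := by
    let +nondep : NormedAlgebra ℚ 𝒜 := .restrictScalars ℚ ℂ 𝒜
    have c1 : Continuous fun u : ℝ => exp ((s - u) • L₂) :=
      exp_continuous.comp ((continuous_const.sub continuous_id).smul continuous_const)
    have c2 : Continuous fun u : ℝ => exp (u • L₂) :=
      exp_continuous.comp (continuous_id.smul continuous_const)
    have c3 : Continuous fun u : ℝ => exp (((s - u) / 2) • L₁) :=
      exp_continuous.comp (((continuous_const.sub continuous_id).div_const 2).smul
        continuous_const)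
    have c4 : Continuous fun u : ℝ => exp ((u / 2) • L₁) :=
      exp_continuous.comp ((continuous_id.div_const 2).smul continuous_const)
    exact (((c1.mul (((c2.mul c3).mul continuous_const).sub
      (continuous_const.mul (c2.mul c3)))).mul c4)).const_smul _
  have hint := intervalIntegral.integral_eq_sub_of_hasDerivAt
    (fun u _ => hderiv u) (hcont.intervalIntegrable 0 s)
  rw [← intervalIntegral.integral_smul, hint]
  simp only [sub_self, zero_smul, exp_zero, one_mul, mul_one, sub_zero, zero_div]
  simp only [mul_assoc]
  abel
end

section
/- Let 𝒜 be a complex Banach algebra and let L₁, L₂ ∈ 𝒜. Then for every t ≥ 0, exp(t L₂)·exp(t L₁) − exp(t(L₁+L₂)) = ∫₀ᵗ exp(s L₂) · [L₂, exp(s L₁)] · exp((t−s)(L₁+L₂)) ds (the exact local error representation for the first-order Lie–Trotter splitting). -/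
open MeasureTheory NormedSpace

/-- Exact local error representation for the first-order Lie–Trotter splitting:
`exp(tL₂) exp(tL₁) − exp(t(L₁+L₂))
  = ∫₀ᵗ exp(sL₂) [L₂, exp(sL₁)] exp((t−s)(L₁+L₂)) ds`. -/
theorem lie_trotter_exact_local_error_representation
    {𝒜 : Type*} [NormedRing 𝒜] [NormedAlgebra ℂ 𝒜] [CompleteSpace 𝒜]
    (L₁ L₂ : 𝒜) (t : ℝ) (ht : 0 ≤ t) :
    exp (t • L₂) * exp (t • L₁) - exp (t • (L₁ + L₂)) =
      ∫ s in (0:ℝ)..t,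
        exp (s • L₂) * (L₂ * exp (s • L₁) - exp (s • L₁) * L₂) *
          exp ((t - s) • (L₁ + L₂)) := by
  set M : 𝒜 := L₁ + L₂ with hM
  set F : ℝ → 𝒜 := fun s => exp (s • L₂) * exp (s • L₁) * exp ((t - s) • M)
    with hF
  set f : ℝ → 𝒜 := fun s =>
      exp (s • L₂) * (L₂ * exp (s • L₁) - exp (s • L₁) * L₂) *
        exp ((t - s) • M) with hf
  have hcomm : ∀ u : ℝ, exp (u • M) * M = M * exp (u • M) := fun u =>
    (((Commute.refl M).smul_left u).exp_left).eq
  have hderiv : ∀ s : ℝ, HasDerivAt F (f s) s := by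
    intro s
    have hA : HasDerivAt (fun u : ℝ => exp (u • L₂)) (exp (s • L₂) * L₂) s :=
      hasDerivAt_exp_smul_const L₂ s
    have hB : HasDerivAt (fun u : ℝ => exp (u • L₁)) (exp (s • L₁) * L₁) s :=
      hasDerivAt_exp_smul_const L₁ s
    have hCin : HasDerivAt (fun u : ℝ => exp (u • M)) (exp ((t - s) • M) * M) (t - s) :=
      hasDerivAt_exp_smul_const M (t - s)
    have hsub : HasDerivAt (fun u : ℝ => t - u) (-1) s := by
      simpa using (hasDerivAt_id s).const_sub t
    have hC : HasDerivAt (fun u : ℝ => exp ((t - u) • M))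
        (-(exp ((t - s) • M) * M)) s := by
      have := HasDerivAt.scomp (𝕜 := ℝ) s hCin hsub
      simpa [Function.comp_def] using this
    have := ((hA.mul hB).mul hC)
    convert this using 1
    · rfl
    simp only [Pi.mul_apply]
    rw [hf, hM]
    simp only [hM ▸ hcomm]
    noncomm_ring
  have hcontf : Continuous f := by
    have h1 : Continuous fun s : ℝ => exp (s • L₂) :=
      (continuous_iff_continuousAt.2 fun x => (exp_analytic (𝕂 := ℂ) x).continuousAt).comp (continuous_id.smul continuous_const)
    have h2 : Continuous fun s : ℝ => exp (s • L₁) :=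
      (continuous_iff_continuousAt.2 fun x => (exp_analytic (𝕂 := ℂ) x).continuousAt).comp (continuous_id.smul continuous_const)
    have h3 : Continuous fun s : ℝ => exp ((t - s) • M) :=
      (continuous_iff_continuousAt.2 fun x => (exp_analytic (𝕂 := ℂ) x).continuousAt).comp ((continuous_const.sub continuous_id).smul continuous_const)
    exact (h1.mul ((continuous_const.mul h2).sub (h2.mul continuous_const))).mul h3
  have hFTC :
      ∫ s in (0:ℝ)..t, f s = F t - F 0 :=
    intervalIntegral.integral_eq_sub_of_hasDerivAt (fun s _ => hderiv s)
      (hcontf.intervalIntegrable 0 t)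
  rw [hf] at hFTC
  rw [hFTC, hF]
  simp [exp_zero]
end

section
/- Let f : ℝ³ → ℂ be a Schwartz function. Then ‖ ∂_r² f ‖_{L²(ℝ³)} ≤ 9 · sqrt( ‖Δf‖_{L²(ℝ³)}² + ‖f‖_{L²(ℝ³)}² ), i.e. the squared radial derivative is bounded from H²(ℝ³) to L²(ℝ³) with norm at most 9. -/
open MeasureTheory SchwartzMap Complex ComplexConjugate
noncomputable section
local notation "E3" => EuclideanSpace ℝ (Fin 3)

/-- The Euclidean Laplacian of `f : ℝ³ → ℂ`, computed as the sum of the second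
partial derivatives in the coordinate directions. -/
noncomputable def laplacian (f : EuclideanSpace ℝ (Fin 3) → ℂ)
    (x : EuclideanSpace ℝ (Fin 3)) : ℂ :=
  ∑ i : Fin 3,
    fderiv ℝ (fun y => fderiv ℝ f y (EuclideanSpace.single i 1)) x
      (EuclideanSpace.single i 1)

/-- evaluation of derivative-of-derivative as second derivative -/
lemma fderiv_eval (g : E3 → ℂ) (hg : Differentiable ℝ (fderiv ℝ g)) (x v w : E3) :
    fderiv ℝ (fun y => fderiv ℝ g y v) x w = fderiv ℝ (fderiv ℝ g) x w v := by
  have h : HasFDerivAt (fun y => fderiv ℝ g y v)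
      ((ContinuousLinearMap.apply ℝ ℂ v).comp (fderiv ℝ (fderiv ℝ g) x)) x :=
    (ContinuousLinearMap.apply ℝ ℂ v).hasFDerivAt.comp x (hg x).hasFDerivAt
  rw [h.fderiv]; rfl

lemma smooth_fderiv (g : E3 → ℂ) (hg : ContDiff ℝ ((⊤:ℕ∞):WithTop ℕ∞) g) : Differentiable ℝ (fderiv ℝ g) :=
  (hg.fderiv_right (m := 1) (WithTop.coe_le_coe.2 le_top)).differentiable one_ne_zero

lemma fderiv_swap (g : E3 → ℂ) (hg : ContDiff ℝ ((⊤:ℕ∞):WithTop ℕ∞) g) (x v w : E3) :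
    fderiv ℝ (fun y => fderiv ℝ g y v) x w = fderiv ℝ (fun y => fderiv ℝ g y w) x v := by
  have hd := smooth_fderiv g hg
  rw [fderiv_eval g hd, fderiv_eval g hd]
  exact second_derivative_symmetric
    (fun y => ((hg.differentiable (by simp)) y).hasFDerivAt) (hd x).hasFDerivAt w v

lemma diffN {x : E3} (hx : x ≠ 0) :
    DifferentiableAt ℝ (fun y : E3 => ‖y‖⁻¹ • y) x :=
  ((differentiableAt_id.norm ℝ hx).inv (norm_ne_zero_iff.2 hx)).smul differentiableAt_id

lemma fderivN_self {x : E3} (hx : x ≠ 0) :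
    fderiv ℝ (fun y : E3 => ‖y‖⁻¹ • y) x x = 0 := by
  set N : E3 → E3 := fun y => ‖y‖⁻¹ • y with hN
  have h1 : HasLineDerivAt ℝ N (fderiv ℝ N x x) x x :=
    (diffN hx).hasFDerivAt.hasLineDerivAt x
  have h2 : HasLineDerivAt ℝ N 0 x x := by
    unfold HasLineDerivAt
    have hc : HasDerivAt (fun _ : ℝ => N x) 0 (0:ℝ) := hasDerivAt_const _ _
    apply hc.congr_of_eventuallyEq
    have hmem : Set.Ioo (-1:ℝ) 1 ∈ nhds (0:ℝ) := Ioo_mem_nhds (by norm_num) (by norm_num)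
    filter_upwards [hmem] with t ht
    have hpos : (0:ℝ) < 1 + t := by linarith [ht.1]
    have : x + t • x = (1 + t) • x := by module
    rw [this, hN]
    simp only [norm_smul, Real.norm_eq_abs, abs_of_pos hpos, smul_smul, mul_inv]
    rw [mul_comm (1+t)⁻¹, mul_assoc, inv_mul_cancel₀ hpos.ne', mul_one]
  exact h1.unique h2

/-- The radial derivative `∂_r f (x) = ⟨x/|x|, ∇f(x)⟩`. -/
noncomputable def radialDeriv (f : EuclideanSpace ℝ (Fin 3) → ℂ)
    (x : EuclideanSpace ℝ (Fin 3)) : ℂ :=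
  fderiv ℝ f x (‖x‖⁻¹ • x)

lemma radial_radial_eq (g : E3 → ℂ) (hg : ContDiff ℝ ((⊤:ℕ∞):WithTop ℕ∞) g) {x : E3} (hx : x ≠ 0) :
    radialDeriv (radialDeriv g) x
      = fderiv ℝ (fderiv ℝ g) x (‖x‖⁻¹ • x) (‖x‖⁻¹ • x) := by
  set N : E3 → E3 := fun y => ‖y‖⁻¹ • y with hN
  have hc : DifferentiableAt ℝ (fderiv ℝ g) x := smooth_fderiv g hg x
  have hrad : radialDeriv g = fun y => fderiv ℝ g y (N y) := rfl
  have key := fderiv_clm_apply hc (diffN hx)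
  have hNx : fderiv ℝ N x (N x) = 0 := by
    have : fderiv ℝ N x (N x) = ‖x‖⁻¹ • fderiv ℝ N x x := by
      simp [hN, (fderiv ℝ N x).map_smul]
    rw [this, fderivN_self hx, smul_zero]
  calc radialDeriv (radialDeriv g) x
      = fderiv ℝ (fun y => fderiv ℝ g y (N y)) x (N x) := rfl
    _ = fderiv ℝ g x (fderiv ℝ N x (N x)) + fderiv ℝ (fderiv ℝ g) x (N x) (N x) := by
        rw [key]; rfl
    _ = fderiv ℝ (fderiv ℝ g) x (N x) (N x) := by rw [hNx, map_zero, zero_add]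

abbrev sgl (i : Fin 3) : EuclideanSpace ℝ (Fin 3) := EuclideanSpace.single i 1

lemma basis_decomp (y : E3) : y = ∑ i, y i • sgl i := by
  apply PiLp.ext; intro j
  rw [WithLp.ofLp_sum, Finset.sum_apply]
  simp [EuclideanSpace.single_apply, PiLp.smul_apply]

lemma coord_abs_le (y : E3) (i : Fin 3) : |y i| ≤ ‖y‖ := by
  rw [EuclideanSpace.norm_eq]
  refine le_trans ?_ (Real.sqrt_le_sqrt (Finset.single_le_sum
    (f := fun j => ‖y j‖^2) (fun _ _ => sq_nonneg _) (Finset.mem_univ i)))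
  rw [Real.sqrt_sq_eq_abs]; simp

lemma pointwise_bound (f : SchwartzMap (EuclideanSpace ℝ (Fin 3)) ℂ) {x : E3} (hx : x ≠ 0) :
    ‖radialDeriv (radialDeriv (⇑f)) x‖
      ≤ ∑ i : Fin 3, ∑ j : Fin 3,
          ‖fderiv ℝ (fun y => fderiv ℝ (⇑f) y (sgl j)) x (sgl i)‖ := by
  have hsm : ContDiff ℝ ((⊤:ℕ∞):WithTop ℕ∞) (⇑f) := f.smooth ⊤
  rw [radial_radial_eq (⇑f) hsm hx]
  set e : E3 := ‖x‖⁻¹ • x with he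
  have hnorm_e : ‖e‖ = 1 := by
    rw [he, norm_smul, norm_inv, norm_norm, inv_mul_cancel₀ (norm_ne_zero_iff.2 hx)]
  have habs : ∀ i, |e i| ≤ 1 := fun i => (coord_abs_le e i).trans_eq hnorm_e
  set A := fderiv ℝ (fderiv ℝ (⇑f)) x with hA
  have expand : A e e = ∑ i, ∑ j, (e i * e j) • A (sgl i) (sgl j) := by
    conv_lhs => rw [basis_decomp e]
    simp only [map_sum, _root_.map_smul, ContinuousLinearMap.sum_apply,
      ContinuousLinearMap.smul_apply, Finset.smul_sum, smul_smul]
    rw [Finset.sum_comm]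
    exact Finset.sum_congr rfl fun i _ => Finset.sum_congr rfl fun j _ => by rw [mul_comm]
  rw [expand]
  refine (norm_sum_le _ _).trans (Finset.sum_le_sum fun i _ => (norm_sum_le _ _).trans
    (Finset.sum_le_sum fun j _ => ?_))
  rw [norm_smul]
  have h1 : ‖e i * e j‖ ≤ 1 := by
    rw [norm_mul]
    calc ‖e i‖ * ‖e j‖ ≤ 1 * 1 := by
          exact mul_le_mul (habs i) (habs j) (norm_nonneg _) zero_le_one
      _ = 1 := one_mul 1
  calc ‖e i * e j‖ * ‖A (sgl i) (sgl j)‖ ≤ 1 * ‖A (sgl i) (sgl j)‖ :=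
        mul_le_mul_of_nonneg_right h1 (norm_nonneg _)
    _ = ‖A (sgl i) (sgl j)‖ := one_mul _
    _ = ‖fderiv ℝ (fun y => fderiv ℝ (⇑f) y (sgl j)) x (sgl i)‖ := by
        rw [fderiv_eval (⇑f) (smooth_fderiv (⇑f) hsm)]

lemma schwartz_bdd (u : SchwartzMap (EuclideanSpace ℝ (Fin 3)) ℂ) :
    ∃ C, ∀ x, ‖u x‖ ≤ C :=
  ⟨SchwartzMap.seminorm ℝ 0 0 u, u.norm_le_seminorm ℝ⟩

lemma integrable_mul_conj (a b : SchwartzMap (EuclideanSpace ℝ (Fin 3)) ℂ) :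
    Integrable (fun x => a x * conj (b x)) volume := by
  have h1 : Integrable (fun x => conj (b x)) volume := by
    simpa using ((Complex.conjCLE : ℂ ≃L[ℝ] ℂ) : ℂ →L[ℝ] ℂ).integrable_comp b.integrable
  exact h1.bdd_mul a.continuous.aestronglyMeasurable (Filter.Eventually.of_forall (schwartz_bdd a).choose_spec)

lemma ibp (u v : SchwartzMap (EuclideanSpace ℝ (Fin 3)) ℂ) (w : E3) :
    ∫ x, u x * conj (fderiv ℝ (⇑v) x w) = - ∫ x, (fderiv ℝ (⇑u) x w) * conj (v x) := by
  have hdv : Differentiable ℝ (⇑v) := (v.smooth ⊤).differentiable (by simp)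
  have hdu : Differentiable ℝ (⇑u) := (u.smooth ⊤).differentiable (by simp)
  have hconj : ∀ y : E3, fderiv ℝ (fun z => conj (v z)) y
      = ((Complex.conjCLE : ℂ ≃L[ℝ] ℂ) : ℂ →L[ℝ] ℂ).comp (fderiv ℝ (⇑v) y) := fun y =>
    (((Complex.conjCLE : ℂ ≃L[ℝ] ℂ) : ℂ →L[ℝ] ℂ).hasFDerivAt.comp y (hdv y).hasFDerivAt).fderiv
  have hg : Differentiable ℝ (fun z => conj (v z)) := fun y =>
    ((((Complex.conjCLE : ℂ ≃L[ℝ] ℂ) : ℂ →L[ℝ] ℂ).hasFDerivAt.comp y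
      (hdv y).hasFDerivAt)).differentiableAt
  have key := integral_mul_fderiv_eq_neg_fderiv_mul_of_integrable (μ := volume)
    (f := (⇑u)) (g := fun z => conj (v z)) (v := w) ?_ ?_ ?_ (fun x _ => hdu x) (fun x _ => hg x)
  · simp only [hconj, ContinuousLinearMap.comp_apply, ContinuousLinearEquiv.coe_coe,
      Complex.conjCLE_apply] at key
    exact key
  · have := integrable_mul_conj (LineDeriv.lineDerivOp w u) v
    simpa only [lineDerivOp_apply_eq_fderiv] using this
  · have := integrable_mul_conj u (LineDeriv.lineDerivOp w v)
    simp only [lineDerivOp_apply_eq_fderiv] at this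
    simp only [hconj, ContinuousLinearMap.comp_apply, ContinuousLinearEquiv.coe_coe,
      Complex.conjCLE_apply]
    exact this
  · exact integrable_mul_conj u v

noncomputable def Dp (a : Fin 3) (g : SchwartzMap (EuclideanSpace ℝ (Fin 3)) ℂ) :
    SchwartzMap (EuclideanSpace ℝ (Fin 3)) ℂ := LineDeriv.lineDerivOp (sgl a) g

lemma Dp_apply (a : Fin 3) (g : SchwartzMap (EuclideanSpace ℝ (Fin 3)) ℂ) (x : E3) :
    Dp a g x = fderiv ℝ (⇑g) x (sgl a) := lineDerivOp_apply_eq_fderiv _ _ _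

lemma Dp_coe (a : Fin 3) (g : SchwartzMap (EuclideanSpace ℝ (Fin 3)) ℂ) :
    ⇑(Dp a g) = fun y => fderiv ℝ (⇑g) y (sgl a) := funext fun y => Dp_apply a g y

lemma Dp_swap (a b : Fin 3) (g : SchwartzMap (EuclideanSpace ℝ (Fin 3)) ℂ) :
    Dp a (Dp b g) = Dp b (Dp a g) := by
  ext x
  rw [Dp_apply, Dp_apply, Dp_coe, Dp_coe]
  exact fderiv_swap (⇑g) (g.smooth ⊤) x (sgl b) (sgl a)

lemma pair_identity (f : SchwartzMap (EuclideanSpace ℝ (Fin 3)) ℂ) (i j : Fin 3) :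
    ∫ x, (Dp j (Dp i f)) x * conj ((Dp j (Dp i f)) x)
      = ∫ x, (Dp j (Dp j f)) x * conj ((Dp i (Dp i f)) x) := by
  have step1 : ∫ x, (Dp j (Dp i f)) x * conj ((Dp j (Dp i f)) x)
      = - ∫ x, (Dp j (Dp j (Dp i f))) x * conj ((Dp i f) x) := by
    have h := ibp (Dp j (Dp i f)) (Dp i f) (sgl j)
    simp only [← Dp_apply] at h
    exact h
  have hswap : Dp j (Dp j (Dp i f)) = Dp i (Dp j (Dp j f)) := by
    rw [Dp_swap j i f, Dp_swap j i (Dp j f)]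
  have step2 : ∫ x, (Dp j (Dp j f)) x * conj ((Dp i (Dp i f)) x)
      = - ∫ x, (Dp i (Dp j (Dp j f))) x * conj ((Dp i f) x) := by
    have h := ibp (Dp j (Dp j f)) (Dp i f) (sgl i)
    simp only [← Dp_apply] at h
    exact h
  rw [step1, hswap, step2]

lemma conj_integral_real (g : E3 → ℂ) :
    ∫ x, g x * conj (g x) = ((∫ x, ‖g x‖^2 : ℝ) : ℂ) := by
  have h : (fun x => g x * conj (g x)) = fun x => ((‖g x‖^2 : ℝ) : ℂ) := by
    funext x; rw [Complex.mul_conj']; push_cast; ring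
  rw [h]; exact integral_ofReal

lemma lap_eq (f : SchwartzMap (EuclideanSpace ℝ (Fin 3)) ℂ) (x : E3) :
    laplacian (⇑f) x = ∑ i, (Dp i (Dp i f)) x := by
  simp only [laplacian, Dp_apply, Dp_coe]

lemma sum_identity (f : SchwartzMap (EuclideanSpace ℝ (Fin 3)) ℂ) :
    ∑ p : Fin 3 × Fin 3, ∫ x, ‖(Dp p.2 (Dp p.1 f)) x‖^2
      = ∫ x, ‖laplacian (⇑f) x‖^2 := by
  have key : ((∑ p : Fin 3 × Fin 3, ∫ x, ‖(Dp p.2 (Dp p.1 f)) x‖^2 : ℝ) : ℂ)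
      = ((∫ x, ‖laplacian (⇑f) x‖^2 : ℝ) : ℂ) := by
    push_cast
    calc (∑ p : Fin 3 × Fin 3, ((∫ x, ‖(Dp p.2 (Dp p.1 f)) x‖^2 : ℝ) : ℂ))
        = ∑ p : Fin 3 × Fin 3, ∫ x, (Dp p.2 (Dp p.1 f)) x * conj ((Dp p.2 (Dp p.1 f)) x) :=
          Finset.sum_congr rfl fun p _ => (conj_integral_real _).symm
      _ = ∑ p : Fin 3 × Fin 3, ∫ x, (Dp p.2 (Dp p.2 f)) x * conj ((Dp p.1 (Dp p.1 f)) x) :=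
          Finset.sum_congr rfl fun p _ => pair_identity f p.1 p.2
      _ = ∫ x, ∑ p : Fin 3 × Fin 3, (Dp p.2 (Dp p.2 f)) x * conj ((Dp p.1 (Dp p.1 f)) x) :=
          (integral_finset_sum _ fun p _ => integrable_mul_conj _ _).symm
      _ = ∫ x, laplacian (⇑f) x * conj (laplacian (⇑f) x) := by
          congr 1; funext x
          rw [Fintype.sum_prod_type, lap_eq, map_sum (starRingEnd ℂ),
            Finset.sum_mul_sum, Finset.sum_comm]
      _ = ((∫ x, ‖laplacian (⇑f) x‖^2 : ℝ) : ℂ) := conj_integral_real _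
  exact_mod_cast key

lemma term_le (f : SchwartzMap (EuclideanSpace ℝ (Fin 3)) ℂ) (p : Fin 3 × Fin 3) :
    ∫ x, ‖(Dp p.2 (Dp p.1 f)) x‖^2 ≤ ∫ x, ‖laplacian (⇑f) x‖^2 := by
  rw [← sum_identity f]
  exact Finset.single_le_sum
    (f := fun q : Fin 3 × Fin 3 => ∫ x, ‖(Dp q.2 (Dp q.1 f)) x‖^2)
    (fun q _ => integral_nonneg fun x => sq_nonneg _) (Finset.mem_univ p)

lemma integrable_sq_norm (u : SchwartzMap (EuclideanSpace ℝ (Fin 3)) ℂ) :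
    Integrable (fun x => ‖u x‖^2) volume := by
  obtain ⟨C, hC⟩ := schwartz_bdd u
  have h := (u.integrable (μ := volume)).norm.bdd_mul
    (u.continuous.norm.aestronglyMeasurable)
    (Filter.Eventually.of_forall fun x => by rw [norm_norm]; exact hC x)
  simpa [sq] using h

lemma memLp2 (u : SchwartzMap (EuclideanSpace ℝ (Fin 3)) ℂ) :
    MemLp (⇑u) 2 volume :=
  (memLp_two_iff_integrable_sq_norm u.continuous.aestronglyMeasurable).2
    (integrable_sq_norm u)

/-- For Schwartz `f : ℝ³ → ℂ`, the squared radial derivative is bounded from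
`H²(ℝ³)` to `L²(ℝ³)` with norm at most `9`:
`‖∂_r² f‖_{L²} ≤ 9 √(‖Δf‖_{L²}² + ‖f‖_{L²}²)`. -/
theorem radial_second_derivative_H2_bound
    (f : SchwartzMap (EuclideanSpace ℝ (Fin 3)) ℂ) :
    eLpNorm
        (fun x => radialDeriv (radialDeriv (f : EuclideanSpace ℝ (Fin 3) → ℂ)) x)
        2 volume
      ≤ ENNReal.ofReal (9 * Real.sqrt
          ((∫ x, ‖laplacian (f : EuclideanSpace ℝ (Fin 3) → ℂ) x‖ ^ 2)
            + ∫ x, ‖f x‖ ^ 2)) := by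
  set h : E3 → ℝ := fun x => ∑ p : Fin 3 × Fin 3, ‖(Dp p.2 (Dp p.1 f)) x‖ with hh
  have h_nonneg : ∀ x, 0 ≤ h x := fun x =>
    Finset.sum_nonneg fun p _ => norm_nonneg _
  -- pointwise bound
  have hpt : ∀ x : E3, ‖radialDeriv (radialDeriv (⇑f)) x‖ ≤ ‖h x‖ := by
    intro x
    rw [Real.norm_of_nonneg (h_nonneg x)]
    rcases eq_or_ne x 0 with rfl | hx
    · have : radialDeriv (radialDeriv (⇑f)) 0 = 0 := by
        simp [radialDeriv]
      rw [this, norm_zero]; exact h_nonneg 0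
    · refine (pointwise_bound f hx).trans_eq ?_
      have key : ∑ p : Fin 3 × Fin 3, ‖(Dp p.2 (Dp p.1 f)) x‖
          = ∑ i : Fin 3, ∑ j : Fin 3,
              ‖fderiv ℝ (fun y => fderiv ℝ (⇑f) y (sgl j)) x (sgl i)‖ := by
        rw [Fintype.sum_prod_type, Finset.sum_comm]
        exact Finset.sum_congr rfl fun i _ => Finset.sum_congr rfl fun j _ => by
          rw [Dp_apply, Dp_coe]
      exact key.symm
  have step1 : eLpNorm (fun x => radialDeriv (radialDeriv (⇑f)) x) 2 volume
      ≤ eLpNorm h 2 volume := eLpNorm_mono_ae (Filter.Eventually.of_forall hpt)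
  -- Memℒp of h
  have hmem : MemLp h 2 volume := by
    rw [hh]
    exact memLp_finsetSum _ fun p _ => (memLp2 (Dp p.2 (Dp p.1 f))).norm
  have step2 : eLpNorm h 2 volume
      = ENNReal.ofReal ((∫ x, ‖h x‖ ^ (2:ℝ)) ^ ((2:ℝ)⁻¹)) := by
    rw [hmem.eLpNorm_eq_integral_rpow_norm two_ne_zero ENNReal.ofNat_ne_top]
    norm_num
  set S1 : ℝ := ∫ x, ‖laplacian (⇑f) x‖ ^ 2 with hS1
  set S2 : ℝ := ∫ x, ‖f x‖ ^ 2 with hS2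
  have hS2_nonneg : 0 ≤ S2 := integral_nonneg fun x => sq_nonneg _
  have hS1_nonneg : 0 ≤ S1 := integral_nonneg fun x => sq_nonneg _
  -- the integral bound
  have hnormpow : ∀ x, ‖h x‖ ^ (2:ℝ) = h x ^ 2 := fun x => by
    rw [show (2:ℝ) = ((2:ℕ):ℝ) by norm_num, Real.rpow_natCast, Real.norm_eq_abs, _root_.sq_abs]
  have hpt2 : ∀ x, h x ^ 2 ≤ 9 * ∑ p : Fin 3 × Fin 3, ‖(Dp p.2 (Dp p.1 f)) x‖ ^ 2 := by
    intro x
    have hcs := Finset.sum_mul_sq_le_sq_mul_sq Finset.univ (fun _ : Fin 3 × Fin 3 => (1:ℝ))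
      (fun p => ‖(Dp p.2 (Dp p.1 f)) x‖)
    simp only [one_mul, one_pow] at hcs
    calc h x ^ 2 ≤ (∑ _p : Fin 3 × Fin 3, (1:ℝ)) * ∑ p : Fin 3 × Fin 3, ‖(Dp p.2 (Dp p.1 f)) x‖ ^ 2 := hcs
      _ = 9 * ∑ p : Fin 3 × Fin 3, ‖(Dp p.2 (Dp p.1 f)) x‖ ^ 2 := by norm_num
  have hint9 : Integrable (fun x => 9 * ∑ p : Fin 3 × Fin 3, ‖(Dp p.2 (Dp p.1 f)) x‖ ^ 2) volume :=
    (integrable_finset_sum _ fun p _ => integrable_sq_norm (Dp p.2 (Dp p.1 f))).const_mul 9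
  have hinth2 : Integrable (fun x => h x ^ 2) volume := by
    have hcont : Continuous h := by
      rw [hh]
      exact continuous_finset_sum _ fun p _ => (Dp p.2 (Dp p.1 f)).continuous.norm
    refine hint9.mono' ((hcont.pow 2).aestronglyMeasurable)
      (Filter.Eventually.of_forall fun x => ?_)
    rw [Real.norm_of_nonneg (sq_nonneg _)]
    exact hpt2 x
  have hT : ∫ x, h x ^ 2 ≤ 81 * (S1 + S2) := by
    have h1 : ∫ x, h x ^ 2 ≤ ∫ x, 9 * ∑ p : Fin 3 × Fin 3, ‖(Dp p.2 (Dp p.1 f)) x‖ ^ 2 :=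
      integral_mono hinth2 hint9 hpt2
    have h2 : ∫ x, 9 * ∑ p : Fin 3 × Fin 3, ‖(Dp p.2 (Dp p.1 f)) x‖ ^ 2
        = 9 * ∑ p : Fin 3 × Fin 3, ∫ x, ‖(Dp p.2 (Dp p.1 f)) x‖ ^ 2 := by
      rw [MeasureTheory.integral_const_mul, integral_finset_sum _ fun p _ => integrable_sq_norm _]
    have h3 : ∑ p : Fin 3 × Fin 3, ∫ x, ‖(Dp p.2 (Dp p.1 f)) x‖ ^ 2 ≤ 9 * S1 := by
      calc ∑ p : Fin 3 × Fin 3, ∫ x, ‖(Dp p.2 (Dp p.1 f)) x‖ ^ 2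
          ≤ ∑ _p : Fin 3 × Fin 3, S1 := Finset.sum_le_sum fun p _ => term_le f p
        _ = 9 * S1 := by rw [Finset.sum_const]; norm_num
    calc ∫ x, h x ^ 2
        ≤ 9 * ∑ p : Fin 3 × Fin 3, ∫ x, ‖(Dp p.2 (Dp p.1 f)) x‖ ^ 2 := h1.trans_eq h2
      _ ≤ 9 * (9 * S1) := mul_le_mul_of_nonneg_left h3 (by norm_num)
      _ = 81 * S1 := by ring
      _ ≤ 81 * (S1 + S2) := by nlinarith
  -- conclude
  refine step1.trans ?_
  rw [step2]
  apply ENNReal.ofReal_le_ofReal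
  have hTnonneg : 0 ≤ ∫ x, h x ^ 2 := integral_nonneg fun x => sq_nonneg _
  calc (∫ x, ‖h x‖ ^ (2:ℝ)) ^ ((2:ℝ)⁻¹)
      = (∫ x, h x ^ 2) ^ ((2:ℝ)⁻¹) := by
        congr 1; exact integral_congr_ae (Filter.Eventually.of_forall hnormpow)
    _ = Real.sqrt (∫ x, h x ^ 2) := by
        rw [Real.sqrt_eq_rpow]; norm_num
    _ ≤ Real.sqrt (81 * (S1 + S2)) := Real.sqrt_le_sqrt hT
    _ = 9 * Real.sqrt (S1 + S2) := by
        rw [Real.sqrt_mul (by norm_num : (0:ℝ) ≤ 81),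
          show (81:ℝ) = 9^2 by norm_num, Real.sqrt_sq (by norm_num : (0:ℝ) ≤ 9)]
end
end

section
/- Let ℓ ∈ ℕ and c > 0. For a > 0 define w_a : (0,∞) → ℝ by w_a(r) := G(r/a) · c/r. Then there exist constants C_{V0}, C_{V1}, C_{V2} > 0, depending only on ℓ and F (not on a, c, r), such that for all a > 0 and all r > 0: (i) | (1/4)·r^ℓ·w_a''''(r) + (1+ℓ)·r^{ℓ−1}·w_a'''(r) + (ℓ²+ℓ)·r^{ℓ−2}·w_a''(r) | ≤ c·C_{V0}·𝟙{r > a/2}·r^{ℓ−5}; (ii) | r^ℓ·w_a'''(r) + 2(1+ℓ)·r^{ℓ−1}·w_a''(r) | ≤ c·C_{V1}·𝟙{r > a/2}·r^{ℓ−4}; (iii) | r^ℓ·w_a''(r) | ≤ c·C_{V2}·𝟙{r > a/2}·r^{ℓ−3}. (These are the bounds |V_{reg,j}(x,t)| ≤ C_{Vj}·χ(|x| > t^β/2)·|x|^{−(5−j−ℓ)} for the coefficients arising in the double commutator [−Δ/2, [V_reg, Δ/2]] r^ℓ, with scale a = t^β.) -/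
open MeasureTheory

/-- The bump profile `exp(−1/((r−1/2)(1−r)))`. -/
noncomputable def bumpProfile (r : ℝ) : ℝ :=
  Real.exp (-(1 / ((r - 1 / 2) * (1 - r))))

/-- The normalization constant `C₀ = (∫_{1/2}^1 exp(−1/((r−1/2)(1−r))) dr)⁻¹. -/
noncomputable def C₀ : ℝ := (∫ r in (1 / 2 : ℝ)..1, bumpProfile r)⁻¹

/-- The smooth cutoff `F`. -/
noncomputable def Fcut (l : ℝ) : ℝ :=
  if l ≤ 1 / 2 then 1
  else if l < 1 then C₀ * ∫ r in l..(1 : ℝ), bumpProfile r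
  else 0

/-- `G := 1 − F`. -/
noncomputable def Gcut (l : ℝ) : ℝ := 1 - Fcut l

open Real Set Filter intervalIntegral

/-- Smooth version of the bump profile, defined on all of `ℝ` and vanishing
outside `(1/2, 1)`. -/
noncomputable def psmooth (x : ℝ) : ℝ :=
  expNegInvGlue ((x - 1 / 2) / 2) * expNegInvGlue ((1 - x) / 2)

lemma psmooth_contDiff : ContDiff ℝ (⊤ : ℕ∞) psmooth := by
  apply ContDiff.mul
  · exact expNegInvGlue.contDiff.comp ((contDiff_id.sub contDiff_const).div_const 2)
  · exact expNegInvGlue.contDiff.comp ((contDiff_const.sub contDiff_id).div_const 2)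

lemma psmooth_continuous : Continuous psmooth := psmooth_contDiff.continuous

lemma psmooth_nonneg (x : ℝ) : 0 ≤ psmooth x :=
  mul_nonneg (expNegInvGlue.nonneg _) (expNegInvGlue.nonneg _)

lemma psmooth_zero_of_le {x : ℝ} (hx : x ≤ 1 / 2) : psmooth x = 0 := by
  have : (x - 1 / 2) / 2 ≤ 0 := by linarith
  rw [psmooth, expNegInvGlue.zero_of_nonpos this, zero_mul]

lemma psmooth_zero_of_ge {x : ℝ} (hx : 1 ≤ x) : psmooth x = 0 := by
  have : (1 - x) / 2 ≤ 0 := by linarith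
  rw [psmooth, expNegInvGlue.zero_of_nonpos this, mul_zero]

lemma psmooth_pos {x : ℝ} (hx : x ∈ Ioo (1 / 2 : ℝ) 1) : 0 < psmooth x :=
  mul_pos (expNegInvGlue.pos_of_pos (by have := hx.1; linarith))
    (expNegInvGlue.pos_of_pos (by have := hx.2; linarith))

lemma psmooth_eq_bump {x : ℝ} (hx : x ∈ Ioo (1 / 2 : ℝ) 1) : psmooth x = bumpProfile x := by
  obtain ⟨h1, h2⟩ := hx
  have e1 : (0:ℝ) < (x - 1 / 2) / 2 := by linarith
  have e2 : (0:ℝ) < (1 - x) / 2 := by linarith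
  have hne1 : x - 1 / 2 ≠ 0 := by linarith
  have hne2 : 1 - x ≠ 0 := by linarith
  have key : 1 / ((x - 1 / 2) * (1 - x)) = 2 / (x - 1 / 2) + 2 / (1 - x) := by
    rw [div_add_div _ _ hne1 hne2,
      div_eq_div_iff (mul_ne_zero hne1 hne2) (mul_ne_zero hne1 hne2)]
    ring
  rw [psmooth, expNegInvGlue, if_neg (not_le.2 e1), expNegInvGlue, if_neg (not_le.2 e2),
    ← Real.exp_add, bumpProfile]
  congr 1
  rw [key, inv_div, inv_div]
  ring

lemma psmooth_intervalIntegrable (a b : ℝ) : IntervalIntegrable psmooth volume a b :=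
  psmooth_continuous.intervalIntegrable a b

lemma integral_bump_eq {l : ℝ} (hl : 1 / 2 ≤ l) (hl2 : l ≤ 1) :
    (∫ r in l..(1:ℝ), bumpProfile r) = ∫ r in l..(1:ℝ), psmooth r := by
  apply intervalIntegral.integral_congr_ae
  have h1 : ∀ᵐ x : ℝ, x ∉ ({1} : Set ℝ) :=
    measure_eq_zero_iff_ae_notMem.mp Real.volume_singleton
  filter_upwards [h1] with x hx hmem
  rw [Set.uIoc_of_le hl2] at hmem
  have hx1 : x ≠ 1 := by simpa using hx
  have : x ∈ Ioo (1 / 2 : ℝ) 1 := ⟨lt_of_le_of_lt hl hmem.1, lt_of_le_of_ne hmem.2 hx1⟩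
  exact (psmooth_eq_bump this).symm

lemma integral_psmooth_pos : 0 < ∫ r in (1 / 2 : ℝ)..1, psmooth r :=
  intervalIntegral_pos_of_pos_on (psmooth_intervalIntegrable _ _)
    (fun x hx => psmooth_pos hx) (by norm_num)

lemma C0_eq : C₀ = (∫ r in (1 / 2 : ℝ)..1, psmooth r)⁻¹ := by
  rw [C₀, integral_bump_eq le_rfl (by norm_num)]

lemma C0_pos : 0 < C₀ := by
  rw [C0_eq]; exact inv_pos.2 integral_psmooth_pos

lemma C0_mul_integral : C₀ * ∫ r in (1 / 2 : ℝ)..1, psmooth r = 1 := by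
  rw [C0_eq]; exact inv_mul_cancel₀ integral_psmooth_pos.ne'

lemma integral_psmooth_zero_of_le {l : ℝ} (hl : l ≤ 1 / 2) :
    (∫ t in (1 / 2 : ℝ)..l, psmooth t) = 0 := by
  have h : EqOn psmooth (fun _ => (0:ℝ)) (Set.uIcc (1 / 2 : ℝ) l) := by
    intro x hx
    exact psmooth_zero_of_le (hx.2.trans_eq (max_eq_left hl))
  rw [intervalIntegral.integral_congr h]
  simp

lemma integral_psmooth_zero_of_ge {l : ℝ} (hl : 1 ≤ l) :
    (∫ t in (1:ℝ)..l, psmooth t) = 0 := by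
  have h : EqOn psmooth (fun _ => (0:ℝ)) (Set.uIcc (1 : ℝ) l) := by
    intro x hx
    exact psmooth_zero_of_ge (le_trans (le_of_eq (min_eq_left hl).symm) hx.1)
  rw [intervalIntegral.integral_congr h]
  simp

/-- The key identity: `Gcut l = C₀ ∫_{1/2}^{l} psmooth`. -/
lemma Gcut_eq (l : ℝ) : Gcut l = C₀ * ∫ t in (1 / 2 : ℝ)..l, psmooth t := by
  unfold Gcut Fcut
  by_cases h1 : l ≤ 1 / 2
  · rw [if_pos h1, integral_psmooth_zero_of_le h1]
    ring
  · push_neg at h1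
    by_cases h2 : l < 1
    · rw [if_neg (not_le.2 h1), if_pos h2, integral_bump_eq h1.le h2.le]
      have e2 : (∫ t in (1 / 2 : ℝ)..l, psmooth t) + ∫ t in l..(1:ℝ), psmooth t
          = ∫ t in (1 / 2 : ℝ)..1, psmooth t :=
        intervalIntegral.integral_add_adjacent_intervals
          (psmooth_intervalIntegrable _ _) (psmooth_intervalIntegrable _ _)
      linear_combination (-C₀) * e2 - C0_mul_integral
    · push_neg at h2
      rw [if_neg (not_le.2 h1), if_neg (not_lt.2 h2)]
      have e2 : (∫ t in (1 / 2 : ℝ)..1, psmooth t) + ∫ t in (1:ℝ)..l, psmooth t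
          = ∫ t in (1 / 2 : ℝ)..l, psmooth t :=
        intervalIntegral.integral_add_adjacent_intervals
          (psmooth_intervalIntegrable _ _) (psmooth_intervalIntegrable _ _)
      rw [integral_psmooth_zero_of_ge h2] at e2
      rw [← e2]
      linear_combination -C0_mul_integral

lemma Gcut_hasDerivAt (x : ℝ) : HasDerivAt Gcut (C₀ * psmooth x) x := by
  have h : HasDerivAt (fun l => ∫ t in (1 / 2 : ℝ)..l, psmooth t) (psmooth x) x :=
    intervalIntegral.integral_hasDerivAt_right (psmooth_intervalIntegrable _ _)
      (psmooth_continuous.aestronglyMeasurable.stronglyMeasurableAtFilter)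
      psmooth_continuous.continuousAt
  have h2 := h.const_mul C₀
  have : Gcut = fun l => C₀ * ∫ t in (1 / 2 : ℝ)..l, psmooth t := funext Gcut_eq
  rw [this]
  exact h2

lemma Gcut_zero {l : ℝ} (hl : l ≤ 1 / 2) : Gcut l = 0 := by
  rw [Gcut_eq, integral_psmooth_zero_of_le hl, mul_zero]

lemma integral_psmooth_tail_nonneg (l : ℝ) : 0 ≤ ∫ t in l..(1:ℝ), psmooth t := by
  rcases le_or_gt l 1 with h | h
  · exact intervalIntegral.integral_nonneg h (fun x _ => psmooth_nonneg x)
  · rw [intervalIntegral.integral_symm, integral_psmooth_zero_of_ge h.le, neg_zero]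

lemma Gcut_nonneg (l : ℝ) : 0 ≤ Gcut l := by
  rw [Gcut_eq]
  rcases le_or_gt (1/2 : ℝ) l with h | h
  · exact mul_nonneg C0_pos.le (intervalIntegral.integral_nonneg h (fun x _ => psmooth_nonneg x))
  · rw [integral_psmooth_zero_of_le h.le, mul_zero]

lemma Gcut_le_one (l : ℝ) : Gcut l ≤ 1 := by
  rw [Gcut_eq]
  have e2 : (∫ t in (1 / 2 : ℝ)..l, psmooth t) + ∫ t in l..(1:ℝ), psmooth t
      = ∫ t in (1 / 2 : ℝ)..1, psmooth t :=
    intervalIntegral.integral_add_adjacent_intervals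
      (psmooth_intervalIntegrable _ _) (psmooth_intervalIntegrable _ _)
  have h3 := integral_psmooth_tail_nonneg l
  nlinarith [C0_mul_integral, C0_pos]

lemma Gcut_abs_le (l : ℝ) : |Gcut l| ≤ 1 :=
  abs_le.2 ⟨by linarith [Gcut_nonneg l], Gcut_le_one l⟩

/-- Iterated derivatives of `psmooth`. -/
noncomputable def psik (k : ℕ) : ℝ → ℝ := iteratedDeriv k psmooth

lemma psik_cont (k : ℕ) : Continuous (psik k) :=
  psmooth_contDiff.continuous_iteratedDeriv k (by exact_mod_cast le_top)

lemma psik_hasDerivAt (k : ℕ) (x : ℝ) : HasDerivAt (psik k) (psik (k + 1) x) x := by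
  have hd : Differentiable ℝ (psik k) := by
    apply psmooth_contDiff.differentiable_iteratedDeriv k
    exact_mod_cast WithTop.coe_lt_coe.2 (WithTop.coe_lt_top k)
  have h : psik (k + 1) = deriv (psik k) := iteratedDeriv_succ
  rw [h]
  exact (hd x).hasDerivAt

lemma iteratedDeriv_zero_fun (k : ℕ) :
    iteratedDeriv k (fun _ : ℝ => (0 : ℝ)) = fun _ => 0 := by
  induction k with
  | zero => exact iteratedDeriv_zero
  | succ n ih => rw [iteratedDeriv_succ, ih]; ext x; simp

lemma psik_zero_of_le (k : ℕ) {x : ℝ} (hx : x ≤ 1 / 2) : psik k x = 0 := by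
  have hIio : EqOn (psik k) (fun _ => (0:ℝ)) (Iio (1 / 2 : ℝ)) := by
    intro y hy
    have hev : psmooth =ᶠ[nhds y] (fun _ => (0:ℝ)) := by
      filter_upwards [Iio_mem_nhds hy] with z hz using psmooth_zero_of_le (le_of_lt hz)
    calc psik k y = iteratedDeriv k (fun _ => (0:ℝ)) y := hev.iteratedDeriv_eq k
    _ = 0 := by rw [iteratedDeriv_zero_fun]
  have h2 : EqOn (psik k) (fun _ => (0:ℝ)) (Iic (1 / 2 : ℝ)) := by
    have := hIio.closure (psik_cont k) continuous_const
    rwa [closure_Iio] at this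
  exact h2 hx

lemma psik_zero_of_ge (k : ℕ) {x : ℝ} (hx : 1 ≤ x) : psik k x = 0 := by
  have hIoi : EqOn (psik k) (fun _ => (0:ℝ)) (Ioi (1 : ℝ)) := by
    intro y hy
    have hev : psmooth =ᶠ[nhds y] (fun _ => (0:ℝ)) := by
      filter_upwards [Ioi_mem_nhds hy] with z hz using psmooth_zero_of_ge (le_of_lt hz)
    calc psik k y = iteratedDeriv k (fun _ => (0:ℝ)) y := hev.iteratedDeriv_eq k
    _ = 0 := by rw [iteratedDeriv_zero_fun]
  have h2 : EqOn (psik k) (fun _ => (0:ℝ)) (Ici (1 : ℝ)) := by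
    have := hIoi.closure (psik_cont k) continuous_const
    rwa [closure_Ioi] at this
  exact h2 hx

lemma psik_bound (k : ℕ) : ∃ M : ℝ, 0 ≤ M ∧ ∀ x, |psik k x| ≤ M := by
  have hcs : HasCompactSupport (psik k) := by
    apply HasCompactSupport.intro (isCompact_Icc (a := (1/2 : ℝ)) (b := 1))
    intro x hx
    rw [Set.mem_Icc, not_and_or, not_le, not_le] at hx
    rcases hx with h | h
    · exact psik_zero_of_le k h.le
    · exact psik_zero_of_ge k h.le
  obtain ⟨C, hC⟩ := hcs.exists_bound_of_continuous (psik_cont k)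
  refine ⟨max C 0, le_max_right _ _, fun x => ?_⟩
  calc |psik k x| = ‖psik k x‖ := (Real.norm_eq_abs _).symm
  _ ≤ C := hC x
  _ ≤ max C 0 := le_max_left _ _

/-- First derivative of `q ↦ Gcut(q/a)·c/q` (for `q ≠ 0`). -/
noncomputable def W1 (a c q : ℝ) : ℝ :=
  c * (C₀ * psik 0 (q / a) * (a⁻¹) ^ 1 * (q⁻¹) ^ 1 - Gcut (q / a) * (q⁻¹) ^ 2)

/-- Second derivative. -/
noncomputable def W2 (a c q : ℝ) : ℝ :=
  c * (C₀ * psik 1 (q / a) * (a⁻¹) ^ 2 * (q⁻¹) ^ 1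
    - 2 * (C₀ * psik 0 (q / a) * (a⁻¹) ^ 1 * (q⁻¹) ^ 2)
    + 2 * (Gcut (q / a) * (q⁻¹) ^ 3))

/-- Third derivative. -/
noncomputable def W3 (a c q : ℝ) : ℝ :=
  c * (C₀ * psik 2 (q / a) * (a⁻¹) ^ 3 * (q⁻¹) ^ 1
    - 3 * (C₀ * psik 1 (q / a) * (a⁻¹) ^ 2 * (q⁻¹) ^ 2)
    + 6 * (C₀ * psik 0 (q / a) * (a⁻¹) ^ 1 * (q⁻¹) ^ 3)
    - 6 * (Gcut (q / a) * (q⁻¹) ^ 4))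

/-- Fourth derivative. -/
noncomputable def W4 (a c q : ℝ) : ℝ :=
  c * (C₀ * psik 3 (q / a) * (a⁻¹) ^ 4 * (q⁻¹) ^ 1
    - 4 * (C₀ * psik 2 (q / a) * (a⁻¹) ^ 3 * (q⁻¹) ^ 2)
    + 12 * (C₀ * psik 1 (q / a) * (a⁻¹) ^ 2 * (q⁻¹) ^ 3)
    - 24 * (C₀ * psik 0 (q / a) * (a⁻¹) ^ 1 * (q⁻¹) ^ 4)
    + 24 * (Gcut (q / a) * (q⁻¹) ^ 5))

lemma hasDerivAt_psik_comp (k : ℕ) (a x : ℝ) :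
    HasDerivAt (fun q => psik k (q / a)) (psik (k + 1) (x / a) * a⁻¹) x := by
  have h := (psik_hasDerivAt k (x / a)).comp x ((hasDerivAt_id x).div_const a)
  simpa [Function.comp_def, one_div] using h

lemma hasDerivAt_Gcut_comp (a x : ℝ) :
    HasDerivAt (fun q => Gcut (q / a)) (C₀ * psik 0 (x / a) * a⁻¹) x := by
  have h := (Gcut_hasDerivAt (x / a)).comp x ((hasDerivAt_id x).div_const a)
  have e : psik 0 = psmooth := iteratedDeriv_zero
  rw [e]
  simpa [Function.comp_def, one_div, mul_assoc] using h

lemma hasDerivAt_W0 (a c x : ℝ) (hx : x ≠ 0) :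
    HasDerivAt (fun q => Gcut (q / a) * (c / q)) (W1 a c x) x := by
  have h2 : HasDerivAt (fun q : ℝ => c / q) (c * -(x ^ 2)⁻¹) x := by
    simpa [div_eq_mul_inv] using (hasDerivAt_inv hx).const_mul c
  have h := (hasDerivAt_Gcut_comp a x).mul h2
  refine h.congr_deriv ?_
  unfold W1
  field_simp
  ring

lemma hasDerivAt_W1 (a c x : ℝ) (hx : x ≠ 0) :
    HasDerivAt (W1 a c) (W2 a c x) x := by
  have hinv := hasDerivAt_inv hx
  have t1 := ((hasDerivAt_psik_comp 0 a x).const_mul C₀).mul_const ((a⁻¹) ^ 1)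
  have h1 := t1.mul (hinv.pow 1)
  have h2 := ((hasDerivAt_Gcut_comp a x)).mul (hinv.pow 2)
  have h := ((h1.sub h2).const_mul c)
  refine h.congr_deriv ?_
  unfold W2
  simp only [Pi.pow_apply]
  ring

lemma hasDerivAt_W2 (a c x : ℝ) (hx : x ≠ 0) :
    HasDerivAt (W2 a c) (W3 a c x) x := by
  have hinv := hasDerivAt_inv hx
  have h1 := (((hasDerivAt_psik_comp 1 a x).const_mul C₀).mul_const ((a⁻¹) ^ 2)).mul (hinv.pow 1)
  have h2 := ((((hasDerivAt_psik_comp 0 a x).const_mul C₀).mul_const ((a⁻¹) ^ 1)).mul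
    (hinv.pow 2)).const_mul 2
  have h3 := ((hasDerivAt_Gcut_comp a x).mul (hinv.pow 3)).const_mul 2
  have h := (((h1.sub h2).add h3).const_mul c)
  refine h.congr_deriv ?_
  unfold W3
  simp only [Pi.pow_apply]
  ring

lemma hasDerivAt_W3 (a c x : ℝ) (hx : x ≠ 0) :
    HasDerivAt (W3 a c) (W4 a c x) x := by
  have hinv := hasDerivAt_inv hx
  have h1 := (((hasDerivAt_psik_comp 2 a x).const_mul C₀).mul_const ((a⁻¹) ^ 3)).mul (hinv.pow 1)
  have h2 := ((((hasDerivAt_psik_comp 1 a x).const_mul C₀).mul_const ((a⁻¹) ^ 2)).mul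
    (hinv.pow 2)).const_mul 3
  have h3 := ((((hasDerivAt_psik_comp 0 a x).const_mul C₀).mul_const ((a⁻¹) ^ 1)).mul
    (hinv.pow 3)).const_mul 6
  have h4 := ((hasDerivAt_Gcut_comp a x).mul (hinv.pow 4)).const_mul 6
  have h := ((((h1.sub h2).add h3).sub h4).const_mul c)
  refine h.congr_deriv ?_
  unfold W4
  simp only [Pi.pow_apply]
  ring

lemma iteratedDeriv_w (a c r : ℝ) (hr : r ≠ 0) :
    iteratedDeriv 2 (fun q => Gcut (q / a) * (c / q)) r = W2 a c r ∧
    iteratedDeriv 3 (fun q => Gcut (q / a) * (c / q)) r = W3 a c r ∧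
    iteratedDeriv 4 (fun q => Gcut (q / a) * (c / q)) r = W4 a c r := by
  have e1 : ∀ x : ℝ, x ≠ 0 → deriv (fun q => Gcut (q / a) * (c / q)) x = W1 a c x :=
    fun x hx => (hasDerivAt_W0 a c x hx).deriv
  have e2 : ∀ x : ℝ, x ≠ 0 →
      deriv (deriv (fun q => Gcut (q / a) * (c / q))) x = W2 a c x := by
    intro x hx
    have hev : deriv (fun q => Gcut (q / a) * (c / q)) =ᶠ[nhds x] W1 a c := by
      filter_upwards [eventually_ne_nhds hx] with y hy using e1 y hy
    rw [hev.deriv_eq]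
    exact (hasDerivAt_W1 a c x hx).deriv
  have e3 : ∀ x : ℝ, x ≠ 0 →
      deriv (deriv (deriv (fun q => Gcut (q / a) * (c / q)))) x = W3 a c x := by
    intro x hx
    have hev : deriv (deriv (fun q => Gcut (q / a) * (c / q))) =ᶠ[nhds x] W2 a c := by
      filter_upwards [eventually_ne_nhds hx] with y hy using e2 y hy
    rw [hev.deriv_eq]
    exact (hasDerivAt_W2 a c x hx).deriv
  have e4 : ∀ x : ℝ, x ≠ 0 →
      deriv (deriv (deriv (deriv (fun q => Gcut (q / a) * (c / q))))) x = W4 a c x := by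
    intro x hx
    have hev : deriv (deriv (deriv (fun q => Gcut (q / a) * (c / q)))) =ᶠ[nhds x] W3 a c := by
      filter_upwards [eventually_ne_nhds hx] with y hy using e3 y hy
    rw [hev.deriv_eq]
    exact (hasDerivAt_W3 a c x hx).deriv
  have h2 : iteratedDeriv 2 (fun q => Gcut (q / a) * (c / q))
      = deriv (deriv (fun q => Gcut (q / a) * (c / q))) := by
    rw [show (2:ℕ) = 1 + 1 from rfl, iteratedDeriv_succ, iteratedDeriv_one]
  have h3 : iteratedDeriv 3 (fun q => Gcut (q / a) * (c / q))
      = deriv (deriv (deriv (fun q => Gcut (q / a) * (c / q)))) := by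
    rw [show (3:ℕ) = 2 + 1 from rfl, iteratedDeriv_succ, h2]
  have h4 : iteratedDeriv 4 (fun q => Gcut (q / a) * (c / q))
      = deriv (deriv (deriv (deriv (fun q => Gcut (q / a) * (c / q))))) := by
    rw [show (4:ℕ) = 3 + 1 from rfl, iteratedDeriv_succ, h3]
  exact ⟨by rw [h2]; exact e2 r hr, by rw [h3]; exact e3 r hr, by rw [h4]; exact e4 r hr⟩

/-- Bounds on the coefficients `V_{reg,0}, V_{reg,1}, V_{reg,2}` arising in the
double commutator `[−Δ/2, [V_reg, Δ/2]] rℓ` for the regularized Coulomb potential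
`w_a(r) = G(r/a)·c/r`: there are constants `C_{V0}, C_{V1}, C_{V2} > 0`, depending
only on `ℓ` and `F` (not on `a`, `c`, `r`), such that for all `c > 0`, `a > 0`, `r > 0`:
`|(1/4)rℓw'''' + (1+ℓ)r^{ℓ−1}w''' + (ℓ²+ℓ)r^{ℓ−2}w''| ≤ c·C_{V0}·𝟙{r>a/2}·r^{ℓ−5}`,
`|rℓw''' + 2(1+ℓ)r^{ℓ−1}w''| ≤ c·C_{V1}·𝟙{r>a/2}·r^{ℓ−4}`, and
`|rℓw''| ≤ c·C_{V2}·𝟙{r>a/2}·r^{ℓ−3}`. -/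
theorem regularized_coulomb_commutator_coefficient_bounds (ℓ : ℕ) :
    ∃ CV0 CV1 CV2 : ℝ, 0 < CV0 ∧ 0 < CV1 ∧ 0 < CV2 ∧
      ∀ c > (0 : ℝ), ∀ a > (0 : ℝ), ∀ r > (0 : ℝ),
        (|(1 / 4) * r ^ (ℓ : ℝ) * iteratedDeriv 4 (fun q => Gcut (q / a) * (c / q)) r
            + (1 + (ℓ : ℝ)) * r ^ ((ℓ : ℝ) - 1)
                * iteratedDeriv 3 (fun q => Gcut (q / a) * (c / q)) r
            + ((ℓ : ℝ) ^ 2 + ℓ) * r ^ ((ℓ : ℝ) - 2)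
                * iteratedDeriv 2 (fun q => Gcut (q / a) * (c / q)) r|
          ≤ c * CV0 * (if a / 2 < r then 1 else 0) * r ^ ((ℓ : ℝ) - 5)) ∧
        (|r ^ (ℓ : ℝ) * iteratedDeriv 3 (fun q => Gcut (q / a) * (c / q)) r
            + 2 * (1 + (ℓ : ℝ)) * r ^ ((ℓ : ℝ) - 1)
                * iteratedDeriv 2 (fun q => Gcut (q / a) * (c / q)) r|
          ≤ c * CV1 * (if a / 2 < r then 1 else 0) * r ^ ((ℓ : ℝ) - 4)) ∧
        (|r ^ (ℓ : ℝ) * iteratedDeriv 2 (fun q => Gcut (q / a) * (c / q)) r|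
          ≤ c * CV2 * (if a / 2 < r then 1 else 0) * r ^ ((ℓ : ℝ) - 3)) := by
  obtain ⟨M0, hM0n, hM0⟩ := psik_bound 0
  obtain ⟨M1, hM1n, hM1⟩ := psik_bound 1
  obtain ⟨M2, hM2n, hM2⟩ := psik_bound 2
  obtain ⟨M3, hM3n, hM3⟩ := psik_bound 3
  set Ms : ℝ := M0 + M1 + M2 + M3 with hMs_def
  have hMsn : 0 ≤ Ms := by positivity
  have hMs : ∀ k : ℕ, k ≤ 3 → ∀ x, |psik k x| ≤ Ms := by
    intro k hk x
    interval_cases k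
    · exact (hM0 x).trans (by simp only [hMs_def]; linarith)
    · exact (hM1 x).trans (by simp only [hMs_def]; linarith)
    · exact (hM2 x).trans (by simp only [hMs_def]; linarith)
    · exact (hM3 x).trans (by simp only [hMs_def]; linarith)
  set K : ℝ := |C₀| * Ms + 1 with hK_def
  have hK1 : 1 ≤ K := by
    have : 0 ≤ |C₀| * Ms := mul_nonneg (abs_nonneg _) hMsn
    simp only [hK_def]; linarith
  have hKpos : 0 < K := lt_of_lt_of_le one_pos hK1
  have hl0 : (0:ℝ) ≤ (ℓ : ℝ) := Nat.cast_nonneg ℓ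
  refine ⟨1 / 4 * (65 * K) + (1 + (ℓ:ℝ)) * (16 * K) + ((ℓ:ℝ) ^ 2 + (ℓ:ℝ)) * (5 * K),
    16 * K + 2 * (1 + (ℓ:ℝ)) * (5 * K), 5 * K, ?_, ?_, ?_, ?_⟩
  · have h1 : 0 ≤ (1 + (ℓ:ℝ)) * (16 * K) := by nlinarith
    have h2 : 0 ≤ ((ℓ:ℝ) ^ 2 + (ℓ:ℝ)) * (5 * K) := by nlinarith
    nlinarith
  · have h1 : 0 ≤ 2 * (1 + (ℓ:ℝ)) * (5 * K) := by nlinarith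
    nlinarith
  · nlinarith
  intro c hc a ha r hr
  obtain ⟨i2, i3, i4⟩ := iteratedDeriv_w a c r hr.ne'
  rw [i2, i3, i4]
  rcases le_or_gt r (a / 2) with hle | hlt
  · -- everything vanishes for r ≤ a/2
    have hra : r / a ≤ 1 / 2 := by rw [div_le_iff₀ ha]; linarith
    have z0 : psik 0 (r / a) = 0 := psik_zero_of_le 0 hra
    have z1 : psik 1 (r / a) = 0 := psik_zero_of_le 1 hra
    have z2 : psik 2 (r / a) = 0 := psik_zero_of_le 2 hra
    have z3 : psik 3 (r / a) = 0 := psik_zero_of_le 3 hra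
    have zG : Gcut (r / a) = 0 := Gcut_zero hra
    have w2z : W2 a c r = 0 := by simp [W2, z0, z1, zG]
    have w3z : W3 a c r = 0 := by simp [W3, z0, z1, z2, zG]
    have w4z : W4 a c r = 0 := by simp [W4, z0, z1, z2, z3, zG]
    rw [if_neg (not_lt.2 hle)]
    refine ⟨?_, ?_, ?_⟩ <;> simp [w2z, w3z, w4z]
  · -- the main region r > a/2
    rw [if_pos hlt]
    have hrinv : (0:ℝ) < r⁻¹ := inv_pos.2 hr
    have tb : ∀ k j n : ℕ, k ≤ 3 →
        |C₀ * psik k (r / a) * (a⁻¹) ^ j * (r⁻¹) ^ n| ≤ K * (r⁻¹) ^ (j + n) := by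
      intro k j n hk
      rcases le_or_gt r a with hra | hra
      · have hainv : a⁻¹ ≤ r⁻¹ := inv_anti₀ hr hra
        have h1 : |C₀ * psik k (r / a) * (a⁻¹) ^ j * (r⁻¹) ^ n|
            = |C₀| * |psik k (r / a)| * (a⁻¹) ^ j * (r⁻¹) ^ n := by
          rw [abs_mul, abs_mul, abs_mul,
            abs_of_nonneg (pow_nonneg (inv_nonneg.2 ha.le) j),
            abs_of_nonneg (pow_nonneg (inv_nonneg.2 hr.le) n)]
        rw [h1]
        have e1 : |C₀| * |psik k (r / a)| ≤ |C₀| * Ms :=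
          mul_le_mul_of_nonneg_left (hMs k hk _) (abs_nonneg C₀)
        have e2 : (a⁻¹) ^ j ≤ (r⁻¹) ^ j := pow_le_pow_left₀ (inv_nonneg.2 ha.le) hainv j
        have step1 : |C₀| * |psik k (r / a)| * (a⁻¹) ^ j ≤ |C₀| * Ms * (r⁻¹) ^ j :=
          mul_le_mul e1 e2 (pow_nonneg (inv_nonneg.2 ha.le) j)
            (mul_nonneg (abs_nonneg _) hMsn)
        have step2 : |C₀| * |psik k (r / a)| * (a⁻¹) ^ j * (r⁻¹) ^ n
            ≤ |C₀| * Ms * (r⁻¹) ^ j * (r⁻¹) ^ n :=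
          mul_le_mul_of_nonneg_right step1 (pow_nonneg (inv_nonneg.2 hr.le) n)
        refine step2.trans ?_
        calc |C₀| * Ms * (r⁻¹) ^ j * (r⁻¹) ^ n
            = (|C₀| * Ms) * ((r⁻¹) ^ j * (r⁻¹) ^ n) := by ring
          _ ≤ K * ((r⁻¹) ^ j * (r⁻¹) ^ n) := by
              refine mul_le_mul_of_nonneg_right (by simp only [hK_def]; linarith) ?_
              positivity
          _ = K * (r⁻¹) ^ (j + n) := by rw [pow_add]
      · have hz : psik k (r / a) = 0 := psik_zero_of_ge k ((one_le_div ha).2 hra.le)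
        rw [hz]
        simp only [mul_zero, zero_mul, abs_zero]
        exact mul_nonneg hKpos.le (pow_nonneg (inv_nonneg.2 hr.le) _)
    have tG : ∀ n : ℕ, |Gcut (r / a) * (r⁻¹) ^ n| ≤ K * (r⁻¹) ^ n := by
      intro n
      rw [abs_mul, abs_of_nonneg (pow_nonneg (inv_nonneg.2 hr.le) n)]
      exact mul_le_mul ((Gcut_abs_le _).trans hK1) le_rfl
        (pow_nonneg (inv_nonneg.2 hr.le) n) hKpos.le
    have b2 : |W2 a c r| ≤ c * (5 * K) * (r⁻¹) ^ 3 := by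
      have h1 : |C₀ * psik 1 (r / a) * (a⁻¹) ^ 2 * (r⁻¹) ^ 1| ≤ K * (r⁻¹) ^ 3 :=
        tb 1 2 1 (by norm_num)
      have h2 : |C₀ * psik 0 (r / a) * (a⁻¹) ^ 1 * (r⁻¹) ^ 2| ≤ K * (r⁻¹) ^ 3 :=
        tb 0 1 2 (by norm_num)
      have h3 := tG 3
      have l1 := abs_le.1 h1
      have l2 := abs_le.1 h2
      have l3 := abs_le.1 h3
      have h4 : |C₀ * psik 1 (r / a) * (a⁻¹) ^ 2 * (r⁻¹) ^ 1
          - 2 * (C₀ * psik 0 (r / a) * (a⁻¹) ^ 1 * (r⁻¹) ^ 2)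
          + 2 * (Gcut (r / a) * (r⁻¹) ^ 3)| ≤ 5 * K * (r⁻¹) ^ 3 :=
        abs_le.2 ⟨by linarith [l1.1, l1.2, l2.1, l2.2, l3.1, l3.2],
          by linarith [l1.1, l1.2, l2.1, l2.2, l3.1, l3.2]⟩
      rw [W2, abs_mul, abs_of_pos hc]
      exact le_trans (mul_le_mul_of_nonneg_left h4 hc.le) (le_of_eq (by ring))
    have b3 : |W3 a c r| ≤ c * (16 * K) * (r⁻¹) ^ 4 := by
      have h1 : |C₀ * psik 2 (r / a) * (a⁻¹) ^ 3 * (r⁻¹) ^ 1| ≤ K * (r⁻¹) ^ 4 :=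
        tb 2 3 1 (by norm_num)
      have h2 : |C₀ * psik 1 (r / a) * (a⁻¹) ^ 2 * (r⁻¹) ^ 2| ≤ K * (r⁻¹) ^ 4 :=
        tb 1 2 2 (by norm_num)
      have h3 : |C₀ * psik 0 (r / a) * (a⁻¹) ^ 1 * (r⁻¹) ^ 3| ≤ K * (r⁻¹) ^ 4 :=
        tb 0 1 3 (by norm_num)
      have h4 := tG 4
      have l1 := abs_le.1 h1
      have l2 := abs_le.1 h2
      have l3 := abs_le.1 h3
      have l4 := abs_le.1 h4
      have h5 : |C₀ * psik 2 (r / a) * (a⁻¹) ^ 3 * (r⁻¹) ^ 1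
          - 3 * (C₀ * psik 1 (r / a) * (a⁻¹) ^ 2 * (r⁻¹) ^ 2)
          + 6 * (C₀ * psik 0 (r / a) * (a⁻¹) ^ 1 * (r⁻¹) ^ 3)
          - 6 * (Gcut (r / a) * (r⁻¹) ^ 4)| ≤ 16 * K * (r⁻¹) ^ 4 :=
        abs_le.2 ⟨by linarith [l1.1, l1.2, l2.1, l2.2, l3.1, l3.2, l4.1, l4.2],
          by linarith [l1.1, l1.2, l2.1, l2.2, l3.1, l3.2, l4.1, l4.2]⟩
      rw [W3, abs_mul, abs_of_pos hc]
      exact le_trans (mul_le_mul_of_nonneg_left h5 hc.le) (le_of_eq (by ring))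
    have b4 : |W4 a c r| ≤ c * (65 * K) * (r⁻¹) ^ 5 := by
      have h1 : |C₀ * psik 3 (r / a) * (a⁻¹) ^ 4 * (r⁻¹) ^ 1| ≤ K * (r⁻¹) ^ 5 :=
        tb 3 4 1 (by norm_num)
      have h2 : |C₀ * psik 2 (r / a) * (a⁻¹) ^ 3 * (r⁻¹) ^ 2| ≤ K * (r⁻¹) ^ 5 :=
        tb 2 3 2 (by norm_num)
      have h3 : |C₀ * psik 1 (r / a) * (a⁻¹) ^ 2 * (r⁻¹) ^ 3| ≤ K * (r⁻¹) ^ 5 :=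
        tb 1 2 3 (by norm_num)
      have h4 : |C₀ * psik 0 (r / a) * (a⁻¹) ^ 1 * (r⁻¹) ^ 4| ≤ K * (r⁻¹) ^ 5 :=
        tb 0 1 4 (by norm_num)
      have h5 := tG 5
      have l1 := abs_le.1 h1
      have l2 := abs_le.1 h2
      have l3 := abs_le.1 h3
      have l4 := abs_le.1 h4
      have l5 := abs_le.1 h5
      have h6 : |C₀ * psik 3 (r / a) * (a⁻¹) ^ 4 * (r⁻¹) ^ 1
          - 4 * (C₀ * psik 2 (r / a) * (a⁻¹) ^ 3 * (r⁻¹) ^ 2)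
          + 12 * (C₀ * psik 1 (r / a) * (a⁻¹) ^ 2 * (r⁻¹) ^ 3)
          - 24 * (C₀ * psik 0 (r / a) * (a⁻¹) ^ 1 * (r⁻¹) ^ 4)
          + 24 * (Gcut (r / a) * (r⁻¹) ^ 5)| ≤ 65 * K * (r⁻¹) ^ 5 :=
        abs_le.2 ⟨by linarith [l1.1, l1.2, l2.1, l2.2, l3.1, l3.2, l4.1, l4.2, l5.1, l5.2],
          by linarith [l1.1, l1.2, l2.1, l2.2, l3.1, l3.2, l4.1, l4.2, l5.1, l5.2]⟩
      rw [W4, abs_mul, abs_of_pos hc]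
      exact le_trans (mul_le_mul_of_nonneg_left h6 hc.le) (le_of_eq (by ring))
    have hsub : ∀ n : ℕ, r ^ ((ℓ:ℝ) - n) = r ^ (ℓ:ℝ) * (r⁻¹) ^ n := by
      intro n
      rw [Real.rpow_sub hr, Real.rpow_natCast r n, div_eq_mul_inv, inv_pow]
    have er1 : r ^ ((ℓ:ℝ) - 1) = r ^ (ℓ:ℝ) * (r⁻¹) ^ 1 := by exact_mod_cast hsub 1
    have er2 : r ^ ((ℓ:ℝ) - 2) = r ^ (ℓ:ℝ) * (r⁻¹) ^ 2 := by exact_mod_cast hsub 2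
    have er3 : r ^ ((ℓ:ℝ) - 3) = r ^ (ℓ:ℝ) * (r⁻¹) ^ 3 := by exact_mod_cast hsub 3
    have er4 : r ^ ((ℓ:ℝ) - 4) = r ^ (ℓ:ℝ) * (r⁻¹) ^ 4 := by exact_mod_cast hsub 4
    have er5 : r ^ ((ℓ:ℝ) - 5) = r ^ (ℓ:ℝ) * (r⁻¹) ^ 5 := by exact_mod_cast hsub 5
    have hrp : (0:ℝ) ≤ r ^ (ℓ:ℝ) := Real.rpow_nonneg hr.le _
    have hrp1 : (0:ℝ) ≤ r ^ ((ℓ:ℝ) - 1) := Real.rpow_nonneg hr.le _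
    have hrp2 : (0:ℝ) ≤ r ^ ((ℓ:ℝ) - 2) := Real.rpow_nonneg hr.le _
    refine ⟨?_, ?_, ?_⟩
    · -- V0 bound
      have A1 : |1 / 4 * r ^ (ℓ:ℝ) * W4 a c r|
          ≤ 1 / 4 * r ^ (ℓ:ℝ) * (c * (65 * K) * (r⁻¹) ^ 5) := by
        have hnn : (0:ℝ) ≤ 1 / 4 * r ^ (ℓ:ℝ) := by linarith [hrp]
        rw [abs_mul, abs_of_nonneg hnn]
        exact mul_le_mul_of_nonneg_left b4 hnn
      have A2 : |(1 + (ℓ:ℝ)) * r ^ ((ℓ:ℝ) - 1) * W3 a c r|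
          ≤ (1 + (ℓ:ℝ)) * r ^ ((ℓ:ℝ) - 1) * (c * (16 * K) * (r⁻¹) ^ 4) := by
        have hnn : (0:ℝ) ≤ (1 + (ℓ:ℝ)) * r ^ ((ℓ:ℝ) - 1) := mul_nonneg (by linarith) hrp1
        rw [abs_mul, abs_of_nonneg hnn]
        exact mul_le_mul_of_nonneg_left b3 hnn
      have A3 : |((ℓ:ℝ) ^ 2 + (ℓ:ℝ)) * r ^ ((ℓ:ℝ) - 2) * W2 a c r|
          ≤ ((ℓ:ℝ) ^ 2 + (ℓ:ℝ)) * r ^ ((ℓ:ℝ) - 2) * (c * (5 * K) * (r⁻¹) ^ 3) := by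
        have hnn : (0:ℝ) ≤ ((ℓ:ℝ) ^ 2 + (ℓ:ℝ)) * r ^ ((ℓ:ℝ) - 2) :=
          mul_nonneg (by positivity) hrp2
        rw [abs_mul, abs_of_nonneg hnn]
        exact mul_le_mul_of_nonneg_left b2 hnn
      calc |1 / 4 * r ^ (ℓ:ℝ) * W4 a c r + (1 + (ℓ:ℝ)) * r ^ ((ℓ:ℝ) - 1) * W3 a c r
            + ((ℓ:ℝ) ^ 2 + (ℓ:ℝ)) * r ^ ((ℓ:ℝ) - 2) * W2 a c r|
          ≤ |1 / 4 * r ^ (ℓ:ℝ) * W4 a c r + (1 + (ℓ:ℝ)) * r ^ ((ℓ:ℝ) - 1) * W3 a c r|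
            + |((ℓ:ℝ) ^ 2 + (ℓ:ℝ)) * r ^ ((ℓ:ℝ) - 2) * W2 a c r| := abs_add_le _ _
        _ ≤ |1 / 4 * r ^ (ℓ:ℝ) * W4 a c r| + |(1 + (ℓ:ℝ)) * r ^ ((ℓ:ℝ) - 1) * W3 a c r|
            + |((ℓ:ℝ) ^ 2 + (ℓ:ℝ)) * r ^ ((ℓ:ℝ) - 2) * W2 a c r| :=
            add_le_add_left (abs_add_le _ _) _
        _ ≤ 1 / 4 * r ^ (ℓ:ℝ) * (c * (65 * K) * (r⁻¹) ^ 5)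
            + (1 + (ℓ:ℝ)) * r ^ ((ℓ:ℝ) - 1) * (c * (16 * K) * (r⁻¹) ^ 4)
            + ((ℓ:ℝ) ^ 2 + (ℓ:ℝ)) * r ^ ((ℓ:ℝ) - 2) * (c * (5 * K) * (r⁻¹) ^ 3) := by
            exact add_le_add (add_le_add A1 A2) A3
        _ = c * (1 / 4 * (65 * K) + (1 + (ℓ:ℝ)) * (16 * K) + ((ℓ:ℝ) ^ 2 + (ℓ:ℝ)) * (5 * K))
            * 1 * r ^ ((ℓ:ℝ) - 5) := by
            rw [er1, er2, er5]; ring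
    · -- V1 bound
      have A1 : |r ^ (ℓ:ℝ) * W3 a c r| ≤ r ^ (ℓ:ℝ) * (c * (16 * K) * (r⁻¹) ^ 4) := by
        rw [abs_mul, abs_of_nonneg hrp]
        exact mul_le_mul_of_nonneg_left b3 hrp
      have A2 : |2 * (1 + (ℓ:ℝ)) * r ^ ((ℓ:ℝ) - 1) * W2 a c r|
          ≤ 2 * (1 + (ℓ:ℝ)) * r ^ ((ℓ:ℝ) - 1) * (c * (5 * K) * (r⁻¹) ^ 3) := by
        have hnn : (0:ℝ) ≤ 2 * (1 + (ℓ:ℝ)) * r ^ ((ℓ:ℝ) - 1) :=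
          mul_nonneg (by linarith) hrp1
        rw [abs_mul, abs_of_nonneg hnn]
        exact mul_le_mul_of_nonneg_left b2 hnn
      calc |r ^ (ℓ:ℝ) * W3 a c r + 2 * (1 + (ℓ:ℝ)) * r ^ ((ℓ:ℝ) - 1) * W2 a c r|
          ≤ |r ^ (ℓ:ℝ) * W3 a c r| + |2 * (1 + (ℓ:ℝ)) * r ^ ((ℓ:ℝ) - 1) * W2 a c r| :=
            abs_add_le _ _
        _ ≤ r ^ (ℓ:ℝ) * (c * (16 * K) * (r⁻¹) ^ 4)
            + 2 * (1 + (ℓ:ℝ)) * r ^ ((ℓ:ℝ) - 1) * (c * (5 * K) * (r⁻¹) ^ 3) :=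
            add_le_add A1 A2
        _ = c * (16 * K + 2 * (1 + (ℓ:ℝ)) * (5 * K)) * 1 * r ^ ((ℓ:ℝ) - 4) := by
            rw [er1, er4]; ring
    · -- V2 bound
      calc |r ^ (ℓ:ℝ) * W2 a c r| = r ^ (ℓ:ℝ) * |W2 a c r| := by
            rw [abs_mul, abs_of_nonneg hrp]
        _ ≤ r ^ (ℓ:ℝ) * (c * (5 * K) * (r⁻¹) ^ 3) := mul_le_mul_of_nonneg_left b2 hrp
        _ = c * (5 * K) * 1 * r ^ ((ℓ:ℝ) - 3) := by rw [er3]; ring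
end

section
/- Let c > 0. For a > 0 define v_a : (0,∞) → ℝ by v_a(r) := F(r/a) · c/r (the singular part V_sin of the Coulomb potential at cutoff scale a = t^β). Then there exist constants C̃₁, C̃₂ > 0, independent of a, c, and r, such that for all a > 0 and all r > 0: r² · |v_a'(r)| ≤ c · C̃₁ · 𝟙{r ≤ a} and r³ · |v_a''(r)| ≤ c · C̃₂ · 𝟙{r ≤ a}. -/
open MeasureTheory

noncomputable def Gfun (x : ℝ) : ℝ := ∫ t in x..(1 : ℝ), bumpProfile t

lemma bump_pos (x : ℝ) : 0 < bumpProfile x := Real.exp_pos _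

lemma bump_le_one {x : ℝ} (hx : x ∈ Set.Icc (1/2 : ℝ) 1) : bumpProfile x ≤ 1 := by
  have h1 : (0:ℝ) ≤ (x - 1/2) * (1 - x) := mul_nonneg (by linarith [hx.1]) (by linarith [hx.2])
  have : -(1 / ((x - 1/2) * (1 - x))) ≤ 0 := by
    simp only [neg_nonpos]
    positivity
  calc bumpProfile x ≤ Real.exp 0 := Real.exp_le_exp.mpr this
    _ = 1 := Real.exp_zero

lemma bump_measurable : Measurable bumpProfile := by
  unfold bumpProfile
  exact Real.measurable_exp.comp
    ((measurable_const.div (((measurable_id.sub_const _).mul (measurable_const.sub measurable_id)))).neg)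

lemma bump_intervalIntegrable {x : ℝ} (hx : x ∈ Set.Icc (1/2 : ℝ) 1) :
    IntervalIntegrable bumpProfile volume x 1 := by
  rw [intervalIntegrable_iff_integrableOn_Ioc_of_le hx.2]
  apply Measure.integrableOn_of_bounded (M := 1) measure_Ioc_lt_top.ne
    bump_measurable.aestronglyMeasurable
  filter_upwards [ae_restrict_mem measurableSet_Ioc] with t ht
  rw [Real.norm_eq_abs, abs_of_pos (bump_pos t)]
  exact bump_le_one ⟨le_trans hx.1 ht.1.le, ht.2⟩

lemma bump_continuousAt {x : ℝ} (hx : x ∈ Set.Ioo (1/2 : ℝ) 1) :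
    ContinuousAt bumpProfile x := by
  have hne : (x - 1/2) * (1 - x) ≠ 0 :=
    ne_of_gt (mul_pos (by linarith [hx.1]) (by linarith [hx.2]))
  unfold bumpProfile
  apply Real.continuous_exp.continuousAt.comp
  exact (continuousAt_const.div
    (((continuousAt_id).sub continuousAt_const).mul (continuousAt_const.sub continuousAt_id)) hne).neg

lemma bump_hasDerivAt {x : ℝ} (hx : x ∈ Set.Ioo (1/2 : ℝ) 1) :
    HasDerivAt bumpProfile
      (bumpProfile x * ((3/2 - 2*x) / ((x - 1/2) * (1 - x))^2)) x := by
  obtain ⟨h1, h2⟩ := hx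
  have hne : (x - 1/2) * (1 - x) ≠ 0 :=
    ne_of_gt (mul_pos (by linarith) (by linarith))
  have hw : HasDerivAt (fun r : ℝ => (r - 1/2) * (1 - r)) (1 * (1 - x) + (x - 1/2) * (-1)) x :=
    (((hasDerivAt_id x).sub_const (1/2)).mul ((hasDerivAt_id x).const_sub 1))
  have hinv := hw.inv hne
  have hexp := hinv.neg.exp
  have hfun : bumpProfile = fun r : ℝ => Real.exp (-(((r - 1/2) * (1 - r))⁻¹)) := by
    funext r; simp [bumpProfile, one_div]
  rw [hfun]
  convert hexp using 1
  · simp only [Pi.neg_apply, Pi.inv_apply]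
  simp only [Pi.neg_apply, Pi.inv_apply]
  ring

lemma bump_deriv_bound {x : ℝ} (hx : x ∈ Set.Ioo (1/2 : ℝ) 1) :
    |bumpProfile x * ((3/2 - 2*x) / ((x - 1/2) * (1 - x))^2)| ≤ 2 := by
  obtain ⟨h1, h2⟩ := hx
  set w : ℝ := (x - 1/2) * (1 - x) with hwdef
  have hwpos : 0 < w := mul_pos (by linarith) (by linarith)
  have key : bumpProfile x ≤ 4 * w^2 := by
    have ht : (0:ℝ) < 1/w := by positivity
    set t : ℝ := 1/w with htdef
    have h3 : t/2 + 1 ≤ Real.exp (t/2) := Real.add_one_le_exp (t/2)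
    have h4 : Real.exp (t/2) * Real.exp (t/2) = Real.exp t := by
      rw [← Real.exp_add]; ring_nf
    have h5 : t^2 ≤ 4 * Real.exp t := by nlinarith [Real.exp_pos (t/2)]
    have hwt : w * t = 1 := by rw [htdef]; field_simp
    have h8 : w^2 * t^2 = 1 := by
      calc w^2 * t^2 = (w*t)^2 := by ring
        _ = 1 := by rw [hwt]; norm_num
    have h7 : 1 ≤ 4 * w^2 * Real.exp t := by
      nlinarith [mul_le_mul_of_nonneg_left h5 (sq_nonneg w)]
    have hB : bumpProfile x = Real.exp (-t) := by rw [bumpProfile]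
    rw [hB, Real.exp_neg, inv_eq_one_div, div_le_iff₀ (Real.exp_pos t)]
    nlinarith [h7]
  have habs : |3/2 - 2*x| ≤ 1/2 := abs_le.mpr ⟨by linarith, by linarith⟩
  calc |bumpProfile x * ((3/2 - 2*x) / w^2)|
      = bumpProfile x * (|3/2 - 2*x| / w^2) := by
        rw [abs_mul, abs_div, abs_of_pos (bump_pos x), abs_of_pos (by positivity : (0:ℝ) < w^2)]
    _ ≤ (4*w^2) * ((1/2) / w^2) := by
        gcongr
    _ = 2 := by field_simp; ring

lemma Gfun_hasDerivAt {x : ℝ} (hx : x ∈ Set.Ioo (1/2 : ℝ) 1) :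
    HasDerivAt Gfun (-(bumpProfile x)) x := by
  have hxI : x ∈ Set.Icc (1/2:ℝ) 1 := ⟨hx.1.le, hx.2.le⟩
  exact intervalIntegral.integral_hasDerivAt_left (bump_intervalIntegrable hxI)
    bump_measurable.aestronglyMeasurable.stronglyMeasurableAtFilter (bump_continuousAt hx)

lemma Gfun_bound {x : ℝ} (hx : x ∈ Set.Icc (1/2 : ℝ) 1) : |Gfun x| ≤ 1 := by
  have h := intervalIntegral.norm_integral_le_of_norm_le_const (C := 1) (f := bumpProfile)
    (a := x) (b := 1) ?_
  · rw [Real.norm_eq_abs] at h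
    show |∫ t in x..(1:ℝ), bumpProfile t| ≤ 1
    calc |∫ t in x..(1:ℝ), bumpProfile t| ≤ 1 * |1 - x| := h
      _ ≤ 1 := by rw [one_mul, abs_of_nonneg (by linarith [hx.2])]; linarith [hx.1]
  · intro t ht
    rw [Set.uIoc_of_le hx.2] at ht
    rw [Real.norm_eq_abs, abs_of_pos (bump_pos t)]
    exact bump_le_one ⟨le_trans hx.1 ht.1.le, ht.2⟩

set_option maxHeartbeats 1600000 in
/-- Bounds on the singular part `v_a(r) = F(r/a)·c/r` of the Coulomb potential:
there exist constants `C̃₁, C̃₂ > 0`, independent of `a`, `c`, `r`, such that for all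
`c > 0`, `a > 0`, `r > 0`: `r²|v_a'(r)| ≤ c·C̃₁·𝟙{r ≤ a}` and
`r³|v_a''(r)| ≤ c·C̃₂·𝟙{r ≤ a}`. -/
theorem singular_coulomb_derivative_bounds :
    ∃ C1 C2 : ℝ, 0 < C1 ∧ 0 < C2 ∧
      ∀ c > (0 : ℝ), ∀ a > (0 : ℝ), ∀ r > (0 : ℝ),
        r ^ 2 * |deriv (fun q => Fcut (q / a) * (c / q)) r|
            ≤ c * C1 * (if r ≤ a then 1 else 0) ∧
          r ^ 3 * |deriv (deriv (fun q => Fcut (q / a) * (c / q))) r|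
            ≤ c * C2 * (if r ≤ a then 1 else 0) := by
  refine ⟨3 + 2*|C₀|, 8 + 8*|C₀|, by positivity, by positivity, ?_⟩
  intro c hc a ha r hr
  set f : ℝ → ℝ := fun q => Fcut (q / a) * (c / q) with hfdef
  -- local identities
  have hEq1 : ∀ q ∈ Set.Iic (a/2), f q = c * q⁻¹ := by
    intro q hq
    have hqa : q / a ≤ 1/2 := by
      rw [div_le_iff₀ ha]
      simp only [Set.mem_Iic] at hq
      linarith
    show Fcut (q/a) * (c/q) = c * q⁻¹
    unfold Fcut
    rw [if_pos hqa, one_mul, div_eq_mul_inv]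
  have hEq2 : ∀ q ∈ Set.Ioo (a/2) a, f q = (C₀ * Gfun (q/a)) * (c * q⁻¹) := by
    intro q hq
    have h1 : ¬ (q/a ≤ 1/2) := by
      rw [not_le, lt_div_iff₀ ha]; linarith [hq.1]
    have h2 : q/a < 1 := (div_lt_one ha).mpr hq.2
    show Fcut (q/a) * (c/q) = (C₀ * Gfun (q/a)) * (c * q⁻¹)
    unfold Fcut Gfun
    rw [if_neg h1, if_pos h2, div_eq_mul_inv c q]
  have hEq3 : ∀ q ∈ Set.Ici a, f q = 0 := by
    intro q hq
    have h2 : ¬ (q/a < 1) := not_lt.mpr ((one_le_div₀ ha).mpr hq)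
    have h1 : ¬ (q/a ≤ 1/2) := by
      rw [not_le]; rw [not_lt] at h2; linarith
    show Fcut (q/a) * (c/q) = 0
    unfold Fcut
    rw [if_neg h1, if_neg h2, zero_mul]
  have hmemIoo : ∀ q ∈ Set.Ioo (a/2) a, q / a ∈ Set.Ioo (1/2:ℝ) 1 := by
    intro q hq
    exact ⟨by rw [lt_div_iff₀ ha]; linarith [hq.1], (div_lt_one ha).mpr hq.2⟩
  -- derivative on inner region
  have hd1 : ∀ q ∈ Set.Ioo (0:ℝ) (a/2), HasDerivAt f (c * -((q:ℝ)^2)⁻¹) q := by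
    intro q hq
    have hg : HasDerivAt (fun y : ℝ => c * y⁻¹) (c * -((q^2)⁻¹)) q :=
      (hasDerivAt_inv (ne_of_gt hq.1)).const_mul c
    refine hg.congr_of_eventuallyEq ?_
    filter_upwards [isOpen_Ioo.mem_nhds hq] with y hy
    exact hEq1 y (le_of_lt hy.2)
  have hderiv1 : ∀ q ∈ Set.Ioo (0:ℝ) (a/2), deriv f q = c * -((q^2)⁻¹) :=
    fun q hq => (hd1 q hq).deriv
  -- derivative value function on middle region
  set D : ℝ → ℝ := fun q =>
    C₀ * (-bumpProfile (q / a) * (1 / a)) * (c * q⁻¹)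
      + C₀ * Gfun (q / a) * (c * -(q ^ 2)⁻¹) with hDdef
  have hd2 : ∀ q ∈ Set.Ioo (a/2) a, HasDerivAt f (D q) q := by
    intro q hq
    have hq0 : (0:ℝ) < q := lt_trans (by positivity) hq.1
    have hqa := hmemIoo q hq
    have h2 : HasDerivAt (fun y : ℝ => y / a) (1/a) q := (hasDerivAt_id q).div_const a
    have hGa : HasDerivAt (fun y : ℝ => Gfun (y/a)) (-bumpProfile (q/a) * (1/a)) q := by
      have h1 := (Gfun_hasDerivAt hqa).comp q h2
      simpa [Function.comp_def] using h1
    have hCGa := hGa.const_mul C₀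
    have hinv : HasDerivAt (fun y : ℝ => c * y⁻¹) (c * -((q^2)⁻¹)) q :=
      (hasDerivAt_inv (ne_of_gt hq0)).const_mul c
    have hmul := hCGa.mul hinv
    have hval : HasDerivAt (fun y => (C₀ * Gfun (y/a)) * (c * y⁻¹)) (D q) q := hmul
    refine hval.congr_of_eventuallyEq ?_
    filter_upwards [isOpen_Ioo.mem_nhds hq] with y hy
    exact hEq2 y hy
  have hderiv2 : ∀ q ∈ Set.Ioo (a/2) a, deriv f q = D q := fun q hq => (hd2 q hq).deriv
  -- derivative on outer region
  have hderiv3 : ∀ q ∈ Set.Ioi a, deriv f q = 0 := by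
    intro q hq
    have he : f =ᶠ[nhds q] (fun _ => (0:ℝ)) := by
      filter_upwards [isOpen_Ioi.mem_nhds hq] with y hy
      exact hEq3 y (Set.Ioi_subset_Ici_self hy)
    rw [he.deriv_eq, deriv_const]
  -- generic computations
  have habs1 : ∀ x : ℝ, 0 < x → x^2 * |c * -((x^2)⁻¹)| = c := by
    intro x hx
    rw [abs_mul, abs_neg, abs_inv, abs_of_pos hc, abs_of_pos (by positivity : (0:ℝ) < x^2)]
    field_simp
  have hdd1 : ∀ x : ℝ, 0 < x →
      HasDerivAt (fun q : ℝ => c * -((q^2)⁻¹)) (c * -(-(2*x) / (x^2)^2)) x := by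
    intro x hx
    have hpow := hasDerivAt_pow 2 x
    have h := ((hpow.inv (by positivity)).neg).const_mul c
    convert h using 1
    · rfl
    · rfl
    · simp only [Pi.neg_apply, Pi.inv_apply]
    push_cast
    ring
  have habs2 : ∀ x : ℝ, 0 < x → x^3 * |c * -(-(2*x) / (x^2)^2)| = 2*c := by
    intro x hx
    rw [abs_mul, abs_of_pos hc]
    rw [show -(-(2*x) / (x^2)^2) = (2*x) / (x^2)^2 by ring]
    rw [abs_of_pos (by positivity)]
    field_simp
  have hC0 : (0:ℝ) ≤ |C₀| := abs_nonneg _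
  rcases lt_trichotomy r (a/2) with hlt | heq | hgt₁
  · -- r < a/2
    have hrIoo : r ∈ Set.Ioo 0 (a/2) := ⟨hr, hlt⟩
    have hra : r ≤ a := by linarith
    rw [if_pos hra]
    constructor
    · rw [hderiv1 r hrIoo, habs1 r hr]
      nlinarith
    · have he : deriv f =ᶠ[nhds r] (fun q => c * -((q^2)⁻¹)) := by
        filter_upwards [isOpen_Ioo.mem_nhds hrIoo] with y hy
        exact hderiv1 y hy
      rw [he.deriv_eq, (hdd1 r hr).deriv, habs2 r hr]
      nlinarith
  · -- r = a/2
    have hra : r ≤ a := by rw [heq]; linarith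
    rw [if_pos hra]
    have hIic : ∀ y ∈ Set.Iic r, f y = c * y⁻¹ := by
      intro y hy
      exact hEq1 y (by rw [← heq]; exact hy)
    constructor
    · by_cases hdiff : DifferentiableAt ℝ f r
      · have hg : HasDerivAt (fun y : ℝ => c * y⁻¹) (c * -((r^2)⁻¹)) r :=
          (hasDerivAt_inv (ne_of_gt hr)).const_mul c
        have hW : HasDerivWithinAt f (c * -((r^2)⁻¹)) (Set.Iic r) r :=
          (hg.hasDerivWithinAt).congr hIic (hIic r Set.self_mem_Iic)
        have hU : UniqueDiffWithinAt ℝ (Set.Iic r) r := uniqueDiffOn_Iic r r Set.self_mem_Iic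
        have hv : deriv f r = c * -((r^2)⁻¹) :=
          hU.eq_deriv _ (hdiff.hasDerivAt.hasDerivWithinAt) hW
        rw [hv, habs1 r hr]
        nlinarith
      · rw [deriv_zero_of_not_differentiableAt hdiff, abs_zero, mul_zero]
        positivity
    · by_cases hdiff2 : DifferentiableAt ℝ (deriv f) r
      · have hsub : Set.Ioo (0:ℝ) r ⊆ Set.Ioo 0 (a/2) := by
          intro y hy; exact ⟨hy.1, by rw [← heq]; exact hy.2⟩
        have hNB : (nhdsWithin r (Set.Ioo (0:ℝ) r)).NeBot := by
          apply mem_closure_iff_nhdsWithin_neBot.mp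
          rw [closure_Ioo (ne_of_lt hr)]
          exact ⟨hr.le, le_refl r⟩
        have hcont2 : ContinuousAt (fun q : ℝ => c * -((q^2)⁻¹)) r := (hdd1 r hr).continuousAt
        have hlim2 : Filter.Tendsto (deriv f) (nhdsWithin r (Set.Ioo 0 r))
            (nhds (c * -((r^2)⁻¹))) := by
          refine Filter.Tendsto.congr' ?_ (hcont2.continuousWithinAt.tendsto)
          filter_upwards [self_mem_nhdsWithin] with q hq
          exact (hderiv1 q (hsub hq)).symm
        have hlim1 : Filter.Tendsto (deriv f) (nhdsWithin r (Set.Ioo 0 r))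
            (nhds (deriv f r)) := (hdiff2.continuousAt.tendsto).mono_left nhdsWithin_le_nhds
        have hval : deriv f r = c * -((r^2)⁻¹) := tendsto_nhds_unique hlim1 hlim2
        have hEqOn : ∀ y ∈ Set.Ioc (0:ℝ) r, deriv f y = c * -((y^2)⁻¹) := by
          intro y hy
          rcases lt_or_eq_of_le hy.2 with h | h
          · exact hderiv1 y ⟨hy.1, by rw [← heq]; exact h⟩
          · rw [h]; exact hval
        have hW : HasDerivWithinAt (deriv f) (c * -(-(2*r) / (r^2)^2)) (Set.Ioc 0 r) r :=
          ((hdd1 r hr).hasDerivWithinAt).congr hEqOn (hEqOn r ⟨hr, le_refl r⟩)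
        have hU : UniqueDiffWithinAt ℝ (Set.Ioc (0:ℝ) r) r :=
          uniqueDiffOn_Ioc 0 r r ⟨hr, le_refl r⟩
        have hv : deriv (deriv f) r = c * -(-(2*r) / (r^2)^2) :=
          hU.eq_deriv _ (hdiff2.hasDerivAt.hasDerivWithinAt) hW
        rw [hv, habs2 r hr]
        nlinarith
      · rw [deriv_zero_of_not_differentiableAt hdiff2, abs_zero, mul_zero]
        positivity
  · rcases lt_trichotomy r a with hlt2 | heq2 | hgt2
    · -- a/2 < r < a : middle region
      have hrIoo : r ∈ Set.Ioo (a/2) a := ⟨hgt₁, hlt2⟩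
      rw [if_pos hlt2.le]
      have hxa := hmemIoo r hrIoo
      have hxaI : r/a ∈ Set.Icc (1/2:ℝ) 1 := ⟨hxa.1.le, hxa.2.le⟩
      have hB1 := bump_le_one hxaI
      have hB0 := bump_pos (r/a)
      have hG := Gfun_bound hxaI
      have hGl := (abs_le.mp hG).1
      have hGu := (abs_le.mp hG).2
      have hs0 : 0 < r/a := by positivity
      have hs1 : r/a < 1 := hxa.2
      constructor
      · rw [hderiv2 r hrIoo]
        have hfact : r^2 * (D r) = c * C₀ * (-(bumpProfile (r/a)) * (r/a) - Gfun (r/a)) := by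
          rw [hDdef]
          field_simp
          ring
        have hinner : |(-(bumpProfile (r/a)) * (r/a) - Gfun (r/a))| ≤ 2 := by
          have h1 : |(-(bumpProfile (r/a)) * (r/a))| ≤ 1 := by
            rw [abs_mul, abs_neg, abs_of_pos hB0, abs_of_pos hs0]
            nlinarith
          calc |(-(bumpProfile (r/a)) * (r/a) - Gfun (r/a))|
              ≤ |(-(bumpProfile (r/a)) * (r/a))| + |Gfun (r/a)| := abs_sub _ _
            _ ≤ 1 + 1 := add_le_add h1 hG
            _ = 2 := by norm_num
        calc r^2 * |D r| = |r^2 * D r| := by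
              rw [abs_mul, abs_of_pos (by positivity : (0:ℝ) < r^2)]
          _ = |c| * |C₀| * |(-(bumpProfile (r/a)) * (r/a) - Gfun (r/a))| := by
              rw [hfact, abs_mul, abs_mul]
          _ ≤ c * |C₀| * 2 := by
              rw [abs_of_pos hc]
              gcongr
          _ ≤ c * (3 + 2*|C₀|) * 1 := by nlinarith
      · -- second derivative, middle region
        have h2 : HasDerivAt (fun y : ℝ => y / a) (1/a) r := (hasDerivAt_id r).div_const a
        set B' : ℝ := bumpProfile (r/a) * ((3/2 - 2*(r/a)) / (((r/a) - 1/2) * (1 - r/a))^2)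
          with hB'def
        have hB'bd : |B'| ≤ 2 := bump_deriv_bound hxa
        have hBc : HasDerivAt (fun y : ℝ => bumpProfile (y/a)) (B' * (1/a)) r := by
          have h1 := (bump_hasDerivAt hxa).comp r h2
          simpa [Function.comp_def, hB'def] using h1
        have hT1a : HasDerivAt (fun y : ℝ => C₀ * (-bumpProfile (y/a) * (1/a)))
            (C₀ * (-(B' * (1/a)) * (1/a))) r := ((hBc.neg).mul_const (1/a)).const_mul C₀
        have hinv1 : HasDerivAt (fun y : ℝ => c * y⁻¹) (c * -((r^2)⁻¹)) r :=
          (hasDerivAt_inv (ne_of_gt hr)).const_mul c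
        have hT1 := hT1a.mul hinv1
        have hGa : HasDerivAt (fun y : ℝ => Gfun (y/a)) (-bumpProfile (r/a) * (1/a)) r := by
          have h1 := (Gfun_hasDerivAt hxa).comp r h2
          simpa [Function.comp_def] using h1
        have hT2a := hGa.const_mul C₀
        have hT2 := hT2a.mul (hdd1 r hr)
        have hDderiv : HasDerivAt D
            (C₀ * (-(B' * (1/a)) * (1/a)) * (c * r⁻¹)
              + C₀ * (-bumpProfile (r/a) * (1/a)) * (c * -((r^2)⁻¹))
              + (C₀ * (-bumpProfile (r/a) * (1/a)) * (c * -((r^2)⁻¹))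
                + C₀ * Gfun (r/a) * (c * -(-(2*r) / (r^2)^2)))) r := by
          rw [hDdef]
          exact hT1.add hT2
        have he2 : deriv f =ᶠ[nhds r] D := by
          filter_upwards [isOpen_Ioo.mem_nhds hrIoo] with y hy
          exact hderiv2 y hy
        rw [he2.deriv_eq, hDderiv.deriv]
        set V : ℝ := C₀ * (-(B' * (1/a)) * (1/a)) * (c * r⁻¹)
              + C₀ * (-bumpProfile (r/a) * (1/a)) * (c * -((r^2)⁻¹))
              + (C₀ * (-bumpProfile (r/a) * (1/a)) * (c * -((r^2)⁻¹))
                + C₀ * Gfun (r/a) * (c * -(-(2*r) / (r^2)^2))) with hVdef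
        have hfact2 : r^3 * V = c * C₀ *
            (-(B') * (r/a)^2 + 2*bumpProfile (r/a)*(r/a) + 2*Gfun (r/a)) := by
          rw [hVdef]
          field_simp
          ring
        have hinner : |(-(B') * (r/a)^2 + 2*bumpProfile (r/a)*(r/a) + 2*Gfun (r/a))| ≤ 6 := by
          have hs2 : |(r/a)^2| ≤ 1 := by
            rw [abs_of_pos (by positivity)]
            nlinarith
          have h1 : |(-(B') * (r/a)^2)| ≤ 2 := by
            rw [abs_mul, abs_neg]
            nlinarith [abs_nonneg B', abs_nonneg ((r/a)^2)]
          have h2 : |2*bumpProfile (r/a)*(r/a)| ≤ 2 := by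
            rw [abs_mul, abs_mul, abs_two, abs_of_pos hB0, abs_of_pos hs0]
            nlinarith
          have h3 : |2*Gfun (r/a)| ≤ 2 := by
            rw [abs_mul, abs_two]; linarith
          calc |(-(B') * (r/a)^2 + 2*bumpProfile (r/a)*(r/a) + 2*Gfun (r/a))|
              ≤ |(-(B') * (r/a)^2 + 2*bumpProfile (r/a)*(r/a))| + |2*Gfun (r/a)| := abs_add_le _ _
            _ ≤ |(-(B') * (r/a)^2)| + |2*bumpProfile (r/a)*(r/a)| + |2*Gfun (r/a)| := by
                linarith [abs_add_le (-(B') * (r/a)^2) (2*bumpProfile (r/a)*(r/a))]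
            _ ≤ 6 := by linarith
        calc r^3 * |V| = |r^3 * V| := by
              rw [abs_mul, abs_of_pos (by positivity : (0:ℝ) < r^3)]
          _ = |c| * |C₀| * |(-(B') * (r/a)^2 + 2*bumpProfile (r/a)*(r/a) + 2*Gfun (r/a))| := by
              rw [hfact2, abs_mul, abs_mul]
          _ ≤ c * |C₀| * 6 := by
              rw [abs_of_pos hc]
              gcongr
          _ ≤ c * (8 + 8*|C₀|) * 1 := by nlinarith
    · -- r = a
      rw [if_pos (le_of_eq heq2)]
      have hra' : a ≤ r := le_of_eq heq2.symm
      have hIci : ∀ y ∈ Set.Ici r, f y = 0 := fun y hy => hEq3 y (le_trans hra' hy)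
      constructor
      · by_cases hdiff : DifferentiableAt ℝ f r
        · have hW : HasDerivWithinAt f 0 (Set.Ici r) r :=
            (hasDerivWithinAt_const r (Set.Ici r) (0:ℝ)).congr hIci (hIci r Set.self_mem_Ici)
          have hU : UniqueDiffWithinAt ℝ (Set.Ici r) r := uniqueDiffOn_Ici r r Set.self_mem_Ici
          have hv : deriv f r = 0 := hU.eq_deriv _ (hdiff.hasDerivAt.hasDerivWithinAt) hW
          rw [hv, abs_zero, mul_zero]
          positivity
        · rw [deriv_zero_of_not_differentiableAt hdiff, abs_zero, mul_zero]
          positivity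
      · by_cases hdiff2 : DifferentiableAt ℝ (deriv f) r
        · have hd3' : ∀ q ∈ Set.Ioi r, deriv f q = 0 := by
            intro q hq
            exact hderiv3 q (by rw [← heq2]; exact hq)
          have hlim2 : Filter.Tendsto (deriv f) (nhdsWithin r (Set.Ioi r)) (nhds 0) := by
            refine Filter.Tendsto.congr' ?_ tendsto_const_nhds
            filter_upwards [self_mem_nhdsWithin] with q hq
            exact (hd3' q hq).symm
          have hlim1 : Filter.Tendsto (deriv f) (nhdsWithin r (Set.Ioi r))
              (nhds (deriv f r)) := (hdiff2.continuousAt.tendsto).mono_left nhdsWithin_le_nhds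
          have hval : deriv f r = 0 := tendsto_nhds_unique hlim1 hlim2
          have hW : HasDerivWithinAt (deriv f) 0 (Set.Ici r) r := by
            refine (hasDerivWithinAt_const r (Set.Ici r) (0:ℝ)).congr ?_ hval
            intro y hy
            rcases eq_or_lt_of_le (Set.mem_Ici.mp hy) with h | h
            · rw [← h]; exact hval
            · exact hd3' y h
          have hU : UniqueDiffWithinAt ℝ (Set.Ici r) r := uniqueDiffOn_Ici r r Set.self_mem_Ici
          have hv : deriv (deriv f) r = 0 :=
            hU.eq_deriv _ (hdiff2.hasDerivAt.hasDerivWithinAt) hW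
          rw [hv, abs_zero, mul_zero]
          positivity
        · rw [deriv_zero_of_not_differentiableAt hdiff2, abs_zero, mul_zero]
          positivity
    · -- r > a
      rw [if_neg (not_le.mpr hgt2)]
      constructor
      · rw [hderiv3 r hgt2]
        simp
      · have he2 : deriv f =ᶠ[nhds r] (fun _ => (0:ℝ)) := by
          filter_upwards [isOpen_Ioi.mem_nhds hgt2] with y hy
          exact hderiv3 y hy
        rw [he2.deriv_eq, deriv_const]
        simp
end
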